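/- Let n ≥ 5, let V = {0,1,…,n−1} with the natural order, let Q be a partial quasi-pairing of V, and set T := Inv(underline(n), Q). Then T is indecomposable if and only if all of the following hold: (C1) ∪Q is a transversal of mc(underline(n)) and Q is an irreducible quasi-pairing of ∪Q; (C2) v_Q^+ ≥ v_Q^- + 2; (C3) for every v, if both {v, v+2} ∈ Q and {v+1, v+3} ∈ Q, then v̂_Q ∈ {v, v+3}; (C4) for every v, if {v, v+1} ∈ Q, then v̂_Q ∈ {v, v+1} and both v̂_Q − 1 ∈ ∪Q and v̂_Q + 1 ∈ ∪Q (in particular v̂_Q ∉ {0, n−1}). -/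

import Mathlib

open Set

/-- The arc relation of the tournament `Inv(underline(V), P)` obtained from the
transitive tournament on a linearly ordered type by reversing the arcs `(x,y)`
with `{x,y} ∈ P`. -/
def InvArc {α : Type*} [LinearOrder α] (P : Set (Set α)) (x y : α) : Prop :=
  (x < y ∧ ({x, y} : Set α) ∉ P) ∨ (y < x ∧ ({x, y} : Set α) ∈ P)

/-- `M` is a module of the subtournament of `Inv(·, P)` induced on the vertex set `W`. -/
def IsModuleOn {α : Type*} [LinearOrder α] (P : Set (Set α)) (W M : Set α) : Prop :=
  M ⊆ W ∧ ∀ v ∈ W, v ∉ M →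
    (∀ x ∈ M, InvArc P v x) ∨ (∀ x ∈ M, InvArc P x v)

/-- A subset of the vertex set `W` is trivial if it is empty, a singleton, or all of `W`. -/
def IsTrivialSubset {α : Type*} (W M : Set α) : Prop :=
  M = ∅ ∨ (∃ a, M = {a}) ∨ M = W

/-- A nontrivial module of the tournament `Inv(·, P)` induced on `W`. -/
def IsNontrivialModuleOn {α : Type*} [LinearOrder α] (P : Set (Set α)) (W M : Set α) : Prop :=
  IsModuleOn P W M ∧ ¬ IsTrivialSubset W M

/-- The tournament `Inv(·, P)` induced on `W` is indecomposable: all its modules are trivial. -/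
def IndecomposableOn {α : Type*} [LinearOrder α] (P : Set (Set α)) (W : Set α) : Prop :=
  ∀ M : Set α, IsModuleOn P W M → IsTrivialSubset W M

/-- The tournament `Inv(·, P)` induced on `W` is decomposable: it has a nontrivial module. -/
def DecomposableOn {α : Type*} [LinearOrder α] (P : Set (Set α)) (W : Set α) : Prop :=
  ∃ M : Set α, IsNontrivialModuleOn P W M

/-- A co-module of the tournament `Inv(·, P)` on `W`: a subset `M` of `W` such that
`M` or `W ∖ M` is a nontrivial module. -/
def IsCoModuleOn {α : Type*} [LinearOrder α] (P : Set (Set α)) (W M : Set α) : Prop :=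
  M ⊆ W ∧ (IsNontrivialModuleOn P W M ∨ IsNontrivialModuleOn P W (W \ M))

/-- `mc(underline(W))`: the family of minimal co-modules of the transitive tournament on `W`
(a minimal co-module contains no other co-module). -/
def mcOn {α : Type*} [LinearOrder α] (W : Set α) : Set (Set α) :=
  {M | IsCoModuleOn (∅ : Set (Set α)) W M ∧
    ∀ C : Set α, IsCoModuleOn (∅ : Set (Set α)) W C → C ⊆ M → C = M}

/-- `S` is a transversal of the family `F`: it meets every member of `F`. -/
def TransversalOf {α : Type*} (S : Set α) (F : Set (Set α)) : Prop :=
  ∀ C ∈ F, (S ∩ C).Nonempty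

/-- A partial pairing of `V`: a set of pairwise disjoint 2-element subsets of `V`. -/
def IsPartialPairingOn {α : Type*} (V : Set α) (P : Set (Set α)) : Prop :=
  (∀ B ∈ P, B ⊆ V ∧ B.ncard = 2) ∧
  ∀ B ∈ P, ∀ C ∈ P, B ≠ C → Disjoint B C

/-- `I` is an interval of the totally ordered set `X`: every element of `X ∖ I` is greater
than all elements of `I` or smaller than all of them. -/
def IsIntervalOf {α : Type*} [LinearOrder α] (X I : Set α) : Prop :=
  I ⊆ X ∧ ∀ v ∈ X \ I, (∀ i ∈ I, v < i) ∨ (∀ i ∈ I, i < v)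

/-- A nontrivial interval of `X`. -/
def IsNontrivialIntervalOf {α : Type*} [LinearOrder α] (X I : Set α) : Prop :=
  IsIntervalOf X I ∧ ¬ IsTrivialSubset X I

/-- A family of blocks `P` on the totally ordered set `X` is irreducible if no nontrivial
interval of `X` is a union of blocks of `P`. -/
def IrreducibleOn {α : Type*} [LinearOrder α] (X : Set α) (P : Set (Set α)) : Prop :=
  ∀ R ⊆ P, ¬ IsNontrivialIntervalOf X (⋃₀ R)

/-- A partial quasi-pairing of `V`: a set `Q` of `m+1` two-element subsets of `V` (`m ≥ 1`)
whose union has size `2m+1`. -/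
def IsPartialQuasiPairingOn {α : Type*} (V : Set α) (Q : Set (Set α)) : Prop :=
  (∀ B ∈ Q, B ⊆ V ∧ B.ncard = 2) ∧
  ∃ m : ℕ, 1 ≤ m ∧ (⋃₀ Q).ncard = 2 * m + 1 ∧ Q.ncard = m + 1

/-- The distinguished data of a quasi-pairing `Q`: `vh = v̂_Q` is the element lying in the two
blocks `{vh, vm}` and `{vh, vp}` of `Q`, with `vm = v_Q^- < v_Q^+ = vp`. -/
def QPData {α : Type*} [LinearOrder α] (Q : Set (Set α)) (vh vm vp : α) : Prop :=
  ({vh, vm} : Set α) ∈ Q ∧ ({vh, vp} : Set α) ∈ Q ∧ vm < vp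

/-- `Q_part`: the partition of `⋃₀ Q` obtained from `Q` by merging its two intersecting
blocks into `B_Q = {v̂_Q, v_Q^-, v_Q^+}`. -/
def QPart {α : Type*} [LinearOrder α] (Q : Set (Set α)) (vh vm vp : α) : Set (Set α) :=
  (Q \ {({vh, vm} : Set α), ({vh, vp} : Set α)}) ∪ {({vh, vm, vp} : Set α)}

namespace S4

def pq (Q : Set (Set ℕ)) (x y : ℕ) : Prop := ({x, y} : Set ℕ) ∈ Q

lemma pq_comm {Q : Set (Set ℕ)} {x y : ℕ} (h : pq Q x y) : pq Q y x := by
  unfold pq at *; rwa [Set.pair_comm]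

structure Ctx (n : ℕ) (Q : Set (Set ℕ)) (vh vm vp : ℕ) : Prop where
  hm : pq Q vh vm
  hp : pq Q vh vp
  hmp : vm < vp
  hne : ∀ {x y : ℕ}, pq Q x y → x ≠ y ∧ x < n ∧ y < n
  hu : ∀ {x y z : ℕ}, pq Q x y → pq Q x z → x ≠ vh → y = z
  hv : ∀ {y : ℕ}, pq Q vh y → y = vm ∨ y = vp
  hrep : ∀ B ∈ Q, ∃ x y : ℕ, x ≠ y ∧ B = {x, y}
  hSfin : (⋃₀ Q).Finite

lemma cnt_le {F : Set (Set ℕ)} (hF : F.Finite) (h2 : ∀ B ∈ F, B.ncard ≤ 2) :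
    (⋃₀ F).ncard ≤ 2 * F.ncard := by
  revert h2
  refine Set.Finite.induction_on (motive := fun F _ =>
    (∀ B ∈ F, B.ncard ≤ 2) → (⋃₀ F).ncard ≤ 2 * F.ncard) F hF (by simp) ?_
  intro B F hBF hFfin ih h2
  have h2' : ∀ C ∈ F, C.ncard ≤ 2 := fun C hC => h2 C (Set.mem_insert_of_mem _ hC)
  have hB : B.ncard ≤ 2 := h2 B (Set.mem_insert _ _)
  rw [Set.sUnion_insert]
  calc (B ∪ ⋃₀ F).ncard ≤ B.ncard + (⋃₀ F).ncard := Set.ncard_union_le _ _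
    _ ≤ 2 + 2 * F.ncard := by have := ih h2'; omega
    _ ≤ 2 * (insert B F).ncard := by
        rw [Set.ncard_insert_of_notMem hBF hFfin]; omega

section Counting

variable {n : ℕ} {Q : Set (Set ℕ)} {vh vm vp : ℕ}

theorem mkCtx (hQ : (∀ B ∈ Q, B ⊆ Set.Iio n ∧ B.ncard = 2) ∧
      ∃ m : ℕ, 1 ≤ m ∧ (⋃₀ Q).ncard = 2 * m + 1 ∧ Q.ncard = m + 1)
    (hm : ({vh, vm} : Set ℕ) ∈ Q) (hp : ({vh, vp} : Set ℕ) ∈ Q) (hmp : vm < vp) :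
    Ctx n Q vh vm vp := by
  obtain ⟨hB2, m, hm1, hScard, hQcard⟩ := hQ
  have hQF : Q.Finite := Set.finite_of_ncard_ne_zero (by omega)
  have hne : ∀ {x y : ℕ}, pq Q x y → x ≠ y ∧ x < n ∧ y < n := by
    intro x y hxy
    obtain ⟨hsub, hcard⟩ := hB2 _ hxy
    refine ⟨?_, hsub (by simp), hsub (by simp)⟩
    rintro rfl
    rw [Set.pair_eq_singleton, Set.ncard_singleton] at hcard
    omega
  have hrep : ∀ B ∈ Q, ∃ x y : ℕ, x ≠ y ∧ B = {x, y} := by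
    intro B hB
    exact Set.ncard_eq_two.mp (hB2 B hB).2
  have rep' : ∀ B ∈ Q, ∀ x ∈ B, ∃ z, z ≠ x ∧ B = {x, z} := by
    intro B hB x hx
    obtain ⟨u, v, huv, rfl⟩ := hrep B hB
    rcases hx with rfl | hx
    · exact ⟨v, huv.symm, rfl⟩
    · rcases hx with rfl; exact ⟨u, huv, Set.pair_comm u x⟩
  have hvm : vh ≠ vm := (hne hm).1
  have hvp : vh ≠ vp := (hne hp).1
  have hBmBp : ({vh, vm} : Set ℕ) ≠ {vh, vp} := by
    intro h
    have : vm = vh ∨ vm = vp := by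
      have h2 : vm ∈ ({vh, vp} : Set ℕ) := h ▸ (by simp : vm ∈ ({vh, vm} : Set ℕ))
      simpa using h2
    rcases this with h' | h'
    · exact hvm h'.symm
    · omega
  have bound : ∀ D ⊆ Q, (⋃₀ Q).ncard ≤ 2 * (Q.ncard - D.ncard) + (⋃₀ D).ncard := by
    intro D hD
    have hDF : D.Finite := hQF.subset hD
    have hUn : ⋃₀ Q = (⋃₀ (Q \ D)) ∪ ⋃₀ D := by
      conv_lhs => rw [← Set.diff_union_of_subset hD]
      rw [Set.sUnion_union]
    rw [hUn]
    calc ((⋃₀ (Q \ D)) ∪ ⋃₀ D).ncard ≤ (⋃₀ (Q \ D)).ncard + (⋃₀ D).ncard :=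
          Set.ncard_union_le _ _
      _ ≤ 2 * (Q \ D).ncard + (⋃₀ D).ncard :=
          Nat.add_le_add_right (cnt_le (hQF.subset Set.diff_subset)
            (fun B hB => le_of_eq (hB2 B (Set.diff_subset hB)).2)) _
      _ = 2 * (Q.ncard - D.ncard) + (⋃₀ D).ncard := by
          rw [Set.ncard_diff hD hDF]
  have contra3 : ∀ B1 B2 B3 : Set ℕ, B1 ∈ Q → B2 ∈ Q → B3 ∈ Q →
      B1 ≠ B2 → B1 ≠ B3 → B2 ≠ B3 → (B1 ∪ (B2 ∪ B3)).ncard ≤ 4 → False := by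
    intro B1 B2 B3 h1 h2 h3 h12 h13 h23 hU
    have hD : ({B1, B2, B3} : Set (Set ℕ)) ⊆ Q := by
      intro B hB; rcases hB with rfl | rfl | rfl <;> assumption
    have hDc : ({B1, B2, B3} : Set (Set ℕ)).ncard = 3 := by
      rw [Set.ncard_insert_of_notMem (by simp [h12, h13])
        ((Set.finite_singleton _).insert _), Set.ncard_pair h23]
    have h3Q : 3 ≤ Q.ncard := by
      have := Set.ncard_le_ncard hD hQF; omega
    have hb := bound _ hD
    have hUeq : ⋃₀ ({B1, B2, B3} : Set (Set ℕ)) = B1 ∪ (B2 ∪ B3) := by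
      simp [Set.sUnion_insert]
    rw [hDc, hUeq] at hb
    omega
  have contra4 : ∀ B1 B2 B3 B4 : Set ℕ, B1 ∈ Q → B2 ∈ Q → B3 ∈ Q → B4 ∈ Q →
      B1 ≠ B2 → B1 ≠ B3 → B1 ≠ B4 → B2 ≠ B3 → B2 ≠ B4 → B3 ≠ B4 →
      (B1 ∪ (B2 ∪ (B3 ∪ B4))).ncard ≤ 6 → False := by
    intro B1 B2 B3 B4 h1 h2 h3 h4 h12 h13 h14 h23 h24 h34 hU
    have hD : ({B1, B2, B3, B4} : Set (Set ℕ)) ⊆ Q := by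
      intro B hB; rcases hB with rfl | rfl | rfl | rfl <;> assumption
    have hDc : ({B1, B2, B3, B4} : Set (Set ℕ)).ncard = 4 := by
      rw [Set.ncard_insert_of_notMem (by simp [h12, h13, h14])
        (((Set.finite_singleton _).insert _).insert _),
        Set.ncard_insert_of_notMem (by simp [h23, h24]) ((Set.finite_singleton _).insert _),
        Set.ncard_pair h34]
    have h4Q : 4 ≤ Q.ncard := by
      have := Set.ncard_le_ncard hD hQF; omega
    have hb := bound _ hD
    have hUeq : ⋃₀ ({B1, B2, B3, B4} : Set (Set ℕ)) = B1 ∪ (B2 ∪ (B3 ∪ B4)) := by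
      simp [Set.sUnion_insert]
    rw [hDc, hUeq] at hb
    omega
  have finN : ∀ s : Set ℕ, s.Finite → (∀ a : ℕ, (insert a s).Finite) := fun s hs a => hs.insert a
  have small4 : ∀ a b c d : ℕ, ({a, b, c, d} : Set ℕ).ncard ≤ 4 := by
    intro a b c d
    have h1 := Set.ncard_insert_le a ({b, c, d} : Set ℕ)
    have h2 := Set.ncard_insert_le b ({c, d} : Set ℕ)
    have h3 := Set.ncard_insert_le c ({d} : Set ℕ)
    have h4 : ({d} : Set ℕ).ncard = 1 := Set.ncard_singleton _
    omega
  have small6 : ∀ a b c d e f : ℕ, ({a, b, c, d, e, f} : Set ℕ).ncard ≤ 6 := by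
    intro a b c d e f
    have h1 := Set.ncard_insert_le a ({b, c, d, e, f} : Set ℕ)
    have h2 := Set.ncard_insert_le b ({c, d, e, f} : Set ℕ)
    have h3 := small4 c d e f
    omega
  have fin4 : ∀ a b c d : ℕ, ({a, b, c, d} : Set ℕ).Finite := by
    intro a b c d
    exact (((Set.finite_singleton d).insert c).insert b).insert a
  have fin6 : ∀ a b c d e f : ℕ, ({a, b, c, d, e, f} : Set ℕ).Finite := by
    intro a b c d e f
    exact ((fin4 c d e f).insert b).insert a
  have hv' : ∀ B ∈ Q, vh ∈ B → B = {vh, vm} ∨ B = {vh, vp} := by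
    intro B hB hvhB
    by_contra hcon
    push_neg at hcon
    obtain ⟨hBm, hBp⟩ := hcon
    obtain ⟨c, hc, hBc⟩ := rep' B hB vh hvhB
    refine contra3 _ _ _ hB hm hp hBm hBp hBmBp ?_
    refine le_trans (Set.ncard_le_ncard ?_ (fin4 vh vm vp c)) (small4 vh vm vp c)
    intro x hx
    simp only [Set.mem_union] at hx
    rcases hx with hx | hx | hx
    · rw [hBc] at hx; rcases hx with rfl | rfl <;> simp
    · rcases hx with rfl | rfl <;> simp
    · rcases hx with rfl | rfl <;> simp
  -- if a block not containing vh meets {vm, vp} off vh : contradiction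
  have half : ∀ x z : ℕ, ({x, z} : Set ℕ) ∈ Q → vh ∉ ({x, z} : Set ℕ) →
      (x = vm ∨ x = vp) → False := by
    intro x z hC hvhC hxmp
    have hCm : ({x, z} : Set ℕ) ≠ {vh, vm} := by
      intro h; rw [h] at hvhC; exact hvhC (by simp)
    have hCp : ({x, z} : Set ℕ) ≠ {vh, vp} := by
      intro h; rw [h] at hvhC; exact hvhC (by simp)
    refine contra3 _ _ _ hC hm hp hCm hCp hBmBp ?_
    refine le_trans (Set.ncard_le_ncard ?_ (fin4 vh vm vp z)) (small4 vh vm vp z)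
    intro y hy
    simp only [Set.mem_union] at hy
    rcases hy with hy | hy | hy
    · rcases hy with rfl | rfl
      · rcases hxmp with rfl | rfl <;> simp
      · simp
    · rcases hy with rfl | rfl <;> simp
    · rcases hy with rfl | rfl <;> simp
  have huB : ∀ B C : Set ℕ, B ∈ Q → C ∈ Q → B ≠ C → ∀ x, x ∈ B → x ∈ C → x = vh := by
    intro B C hB hC hBC x hxB hxC
    by_contra hxvh
    obtain ⟨y, hy, rfl⟩ := rep' B hB x hxB
    obtain ⟨z, hz, rfl⟩ := rep' C hC x hxC
    by_cases hvB : vh ∈ ({x, y} : Set ℕ)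
    · rcases hv' _ hB hvB with hBe | hBe
      · have hxvm : x = vm := by
          have : x ∈ ({vh, vm} : Set ℕ) := hBe ▸ (by simp : x ∈ ({x, y} : Set ℕ))
          rcases this with h | h
          · exact absurd h hxvh
          · exact h
        by_cases hvC : vh ∈ ({x, z} : Set ℕ)
        · rcases hv' _ hC hvC with hCe | hCe
          · exact hBC (hBe.trans hCe.symm)
          · have h2 : x ∈ ({vh, vp} : Set ℕ) := hCe ▸ (by simp : x ∈ ({x, z} : Set ℕ))
            simp only [Set.mem_insert_iff, Set.mem_singleton_iff] at h2
            rcases h2 with h2 | h2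
            · exact hxvh h2
            · omega
        · exact half x z hC hvC (Or.inl hxvm)
      · have hxvp : x = vp := by
          have h2 : x ∈ ({vh, vp} : Set ℕ) := hBe ▸ (by simp : x ∈ ({x, y} : Set ℕ))
          simp only [Set.mem_insert_iff, Set.mem_singleton_iff] at h2
          tauto
        by_cases hvC : vh ∈ ({x, z} : Set ℕ)
        · rcases hv' _ hC hvC with hCe | hCe
          · have h2 : x ∈ ({vh, vm} : Set ℕ) := hCe ▸ (by simp : x ∈ ({x, z} : Set ℕ))
            simp only [Set.mem_insert_iff, Set.mem_singleton_iff] at h2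
            rcases h2 with h2 | h2
            · exact hxvh h2
            · omega
          · exact hBC (hBe.trans hCe.symm)
        · exact half x z hC hvC (Or.inr hxvp)
    · by_cases hvC : vh ∈ ({x, z} : Set ℕ)
      · rcases hv' _ hC hvC with hCe | hCe
        · have hxvm : x = vm := by
            have : x ∈ ({vh, vm} : Set ℕ) := hCe ▸ (by simp : x ∈ ({x, z} : Set ℕ))
            rcases this with h | h
            · exact absurd h hxvh
            · exact h
          exact half x y hB hvB (Or.inl hxvm)
        · have hxvp : x = vp := by
            have : x ∈ ({vh, vp} : Set ℕ) := hCe ▸ (by simp : x ∈ ({x, z} : Set ℕ))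
            rcases this with h | h
            · exact absurd h hxvh
            · exact h
          exact half x y hB hvB (Or.inr hxvp)
      · -- four distinct blocks
        have hBm' : ({x, y} : Set ℕ) ≠ {vh, vm} := by
          intro h; rw [h] at hvB; exact hvB (by simp)
        have hBp' : ({x, y} : Set ℕ) ≠ {vh, vp} := by
          intro h; rw [h] at hvB; exact hvB (by simp)
        have hCm' : ({x, z} : Set ℕ) ≠ {vh, vm} := by
          intro h; rw [h] at hvC; exact hvC (by simp)
        have hCp' : ({x, z} : Set ℕ) ≠ {vh, vp} := by
          intro h; rw [h] at hvC; exact hvC (by simp)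
        refine contra4 _ _ _ _ hB hC hm hp hBC hBm' hBp' hCm' hCp' hBmBp ?_
        refine le_trans (Set.ncard_le_ncard ?_ (fin6 x y z vh vm vp)) (small6 x y z vh vm vp)
        intro w hw
        simp only [Set.mem_union] at hw
        rcases hw with hw | hw | hw | hw
        · rcases hw with rfl | rfl <;> simp
        · rcases hw with rfl | rfl <;> simp
        · rcases hw with rfl | rfl <;> simp
        · rcases hw with rfl | rfl <;> simp
  have hSfin : (⋃₀ Q).Finite := Set.finite_of_ncard_ne_zero (by omega)
  refine ⟨hm, hp, hmp, @hne, ?_, ?_, hrep, hSfin⟩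
  · intro x y z hxy hxz hxvh
    by_cases hE : ({x, y} : Set ℕ) = {x, z}
    · have h2 : y ∈ ({x, z} : Set ℕ) := hE ▸ (by simp : y ∈ ({x, y} : Set ℕ))
      simp only [Set.mem_insert_iff, Set.mem_singleton_iff] at h2
      rcases h2 with h2 | h2
      · exact absurd h2.symm (hne hxy).1
      · exact h2
    · exact absurd (huB _ _ hxy hxz hE x (by simp) (by simp)) hxvh
  · intro y hy
    rcases hv' _ hy (by simp) with h | h
    · left
      have h2 : y ∈ ({vh, vm} : Set ℕ) := h ▸ (by simp : y ∈ ({vh, y} : Set ℕ))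
      simp only [Set.mem_insert_iff, Set.mem_singleton_iff] at h2
      rcases h2 with h2 | h2
      · exact absurd h2.symm (hne hy).1
      · exact h2
    · right
      have h2 : y ∈ ({vh, vp} : Set ℕ) := h ▸ (by simp : y ∈ ({vh, y} : Set ℕ))
      simp only [Set.mem_insert_iff, Set.mem_singleton_iff] at h2
      rcases h2 with h2 | h2
      · exact absurd h2.symm (hne hy).1
      · exact h2

end Counting

section Basic

variable {n : ℕ} {Q : Set (Set ℕ)} {vh vm vp : ℕ}

lemma mem_S (C : Ctx n Q vh vm vp) {x : ℕ} : x ∈ ⋃₀ Q ↔ ∃ y, pq Q x y := by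
  constructor
  · rintro ⟨B, hB, hx⟩
    obtain ⟨u, v, huv, rfl⟩ := C.hrep B hB
    rcases hx with rfl | hx
    · exact ⟨v, hB⟩
    · rw [Set.mem_singleton_iff] at hx
      subst hx
      exact ⟨u, pq_comm hB⟩
  · rintro ⟨y, h⟩
    exact ⟨{x, y}, h, by simp⟩

lemma pq_mem_S (C : Ctx n Q vh vm vp) {x y : ℕ} (h : pq Q x y) :
    x ∈ ⋃₀ Q ∧ y ∈ ⋃₀ Q :=
  ⟨(mem_S C).2 ⟨y, h⟩, (mem_S C).2 ⟨x, pq_comm h⟩⟩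

lemma invArc_iff {x y : ℕ} : InvArc Q x y ↔ (x < y ∧ ¬ pq Q x y) ∨ (y < x ∧ pq Q x y) :=
  Iff.rfl

lemma module_of {M : Set ℕ} (hsub : M ⊆ Set.Iio n)
    (h : ∀ v < n, v ∉ M → (∀ x ∈ M, InvArc Q v x) ∨ (∀ x ∈ M, InvArc Q x v)) :
    IsModuleOn Q (Set.Iio n) M :=
  ⟨hsub, fun v hv => h v (Set.mem_Iio.mp hv)⟩

lemma exists_third (hn : 5 ≤ n) (x y : ℕ) : ∃ z, z < n ∧ z ≠ x ∧ z ≠ y := by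
  by_cases h0 : x = 0 ∨ y = 0
  · by_cases h1 : x = 1 ∨ y = 1
    · exact ⟨2, by omega, by omega, by omega⟩
    · exact ⟨1, by omega, by omega, by omega⟩
  · exact ⟨0, by omega, by omega, by omega⟩

lemma nontrivial_pair (hn : 5 ≤ n) {x y : ℕ} (hxy : x ≠ y) :
    ¬ IsTrivialSubset (Set.Iio n) ({x, y} : Set ℕ) := by
  rintro (h | ⟨a, h⟩ | h)
  · have : x ∈ ({x, y} : Set ℕ) := by simp
    rw [h] at this; exact this
  · have hx : x ∈ ({a} : Set ℕ) := h ▸ (by simp : x ∈ ({x, y} : Set ℕ))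
    have hy : y ∈ ({a} : Set ℕ) := h ▸ (by simp : y ∈ ({x, y} : Set ℕ))
    rw [Set.mem_singleton_iff] at hx hy
    exact hxy (hx.trans hy.symm)
  · obtain ⟨z, hz1, hz2, hz3⟩ := exists_third hn x y
    have : z ∈ ({x, y} : Set ℕ) := h.symm ▸ Set.mem_Iio.mpr hz1
    rcases this with h' | h'
    · exact hz2 h'
    · rw [Set.mem_singleton_iff] at h'; exact hz3 h'

lemma nontrivial_compl (hn : 5 ≤ n) {t : ℕ} (ht : t < n) :
    ¬ IsTrivialSubset (Set.Iio n) (Set.Iio n \ {t}) := by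
  have hex : ∃ z w : ℕ, z < n ∧ w < n ∧ z ≠ w ∧ z ≠ t ∧ w ≠ t := by
    by_cases h0 : t = 0
    · exact ⟨1, 2, by omega, by omega, by omega, by omega, by omega⟩
    · by_cases h1 : t = 1
      · exact ⟨0, 2, by omega, by omega, by omega, by omega, by omega⟩
      · exact ⟨0, 1, by omega, by omega, by omega, by omega, by omega⟩
  obtain ⟨z, w, hz, hw, hzw, hzt, hwt⟩ := hex
  rintro (h | ⟨a, h⟩ | h)
  · have : z ∈ Set.Iio n \ {t} := ⟨Set.mem_Iio.mpr hz, by simpa using hzt⟩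
    rw [h] at this; exact this
  · have h1 : z ∈ ({a} : Set ℕ) := h ▸ ⟨Set.mem_Iio.mpr hz, by simpa using hzt⟩
    have h2 : w ∈ ({a} : Set ℕ) := h ▸ ⟨Set.mem_Iio.mpr hw, by simpa using hwt⟩
    rw [Set.mem_singleton_iff] at h1 h2
    exact hzw (h1.trans h2.symm)
  · have : t ∈ Set.Iio n \ {t} := h.symm ▸ Set.mem_Iio.mpr ht
    exact this.2 rfl

lemma not_trivial_of (hM0 : M.Nonempty) (hM1 : ∀ a : ℕ, M ≠ {a}) (hM2 : M ≠ Set.Iio n) :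
    ¬ IsTrivialSubset (Set.Iio n) M := by
  rintro (h | ⟨a, h⟩ | h)
  · rw [h] at hM0; exact Set.not_nonempty_empty hM0
  · exact hM1 a h
  · exact hM2 h

end Basic
section Forward

variable {n : ℕ} {Q : Set (Set ℕ)} {vh vm vp : ℕ}

lemma rep_of_mem (C : Ctx n Q vh vm vp) {B : Set ℕ} {x : ℕ} (hB : B ∈ Q) (hx : x ∈ B) :
    ∃ z, z ≠ x ∧ B = {x, z} := by
  obtain ⟨u, v, huv, rfl⟩ := C.hrep B hB
  rcases hx with rfl | hx
  · exact ⟨v, huv.symm, rfl⟩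
  · rw [Set.mem_singleton_iff] at hx; subst hx
    exact ⟨u, huv, Set.pair_comm u x⟩

lemma S_lt (C : Ctx n Q vh vm vp) {x : ℕ} (hx : x ∈ ⋃₀ Q) : x < n := by
  obtain ⟨y, hy⟩ := (mem_S C).1 hx
  exact (C.hne hy).2.1

lemma two_of {I : Set ℕ} (h0 : I.Nonempty) (h1 : ∀ a : ℕ, I ≠ {a}) :
    ∃ x ∈ I, ∃ y ∈ I, x ≠ y := by
  obtain ⟨x, hx⟩ := h0
  by_contra hcon
  push_neg at hcon
  exact h1 x (Set.eq_singleton_iff_unique_mem.mpr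
    ⟨hx, fun y hy => (hcon x hx y hy).symm⟩)

lemma fw_c2 (hn : 5 ≤ n) (C : Ctx n Q vh vm vp)
    (hInd : IndecomposableOn Q (Set.Iio n)) : vm + 2 ≤ vp := by
  by_contra hcon
  have hvp : vp = vm + 1 := by have := C.hmp; omega
  have hvmn : vm < n := (C.hne C.hm).2.2
  have hvpn : vp < n := (C.hne C.hp).2.2
  have hvhm : vh ≠ vm := (C.hne C.hm).1
  have hvhp : vh ≠ vp := (C.hne C.hp).1
  have hpm : ∀ w, pq Q vm w → w = vh := fun w h => C.hu h (pq_comm C.hm) (Ne.symm hvhm)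
  have hpp : ∀ w, pq Q vp w → w = vh := fun w h => C.hu h (pq_comm C.hp) (Ne.symm hvhp)
  have hmod : IsModuleOn Q (Set.Iio n) ({vm, vp} : Set ℕ) := by
    refine module_of (by
      intro z hz
      simp only [Set.mem_insert_iff, Set.mem_singleton_iff] at hz
      rcases hz with rfl | rfl <;> exact Set.mem_Iio.mpr (by omega)) ?_
    intro w hw hwM
    have hwvm : w ≠ vm := fun h => hwM (h ▸ (by simp))
    have hwvp : w ≠ vp := fun h => hwM (h ▸ (by simp))
    by_cases hwh : w = vh
    · rcases (show vh < vm ∨ vp < vh by omega) with h1 | h1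
      · right
        intro x hx
        rw [hwh]
        rcases hx with rfl | hx
        · exact Or.inr ⟨h1, pq_comm C.hm⟩
        · rw [Set.mem_singleton_iff] at hx; subst hx
          exact Or.inr ⟨by omega, pq_comm C.hp⟩
      · left
        intro x hx
        rw [hwh]
        rcases hx with rfl | hx
        · exact Or.inr ⟨by omega, C.hm⟩
        · rw [Set.mem_singleton_iff] at hx; subst hx
          exact Or.inr ⟨h1, C.hp⟩
    · have np1 : ¬ pq Q w vm := fun h => hwh (hpm w (pq_comm h))
      have np2 : ¬ pq Q w vp := fun h => hwh (hpp w (pq_comm h))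
      rcases (by omega : w < vm ∨ vp < w) with h1 | h1
      · left
        intro x hx
        rcases hx with rfl | hx
        · exact Or.inl ⟨h1, np1⟩
        · rw [Set.mem_singleton_iff] at hx; subst hx
          exact Or.inl ⟨by omega, np2⟩
      · right
        intro x hx
        rcases hx with rfl | hx
        · exact Or.inl ⟨by omega, fun h => np1 (pq_comm h)⟩
        · rw [Set.mem_singleton_iff] at hx; subst hx
          exact Or.inl ⟨h1, fun h => np2 (pq_comm h)⟩
  exact nontrivial_pair hn (by omega : vm ≠ vp) (hInd _ hmod)

lemma fw_c3 (hn : 5 ≤ n) (C : Ctx n Q vh vm vp)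
    (hInd : IndecomposableOn Q (Set.Iio n)) :
    ∀ v, v < n → ({v, v + 2} : Set ℕ) ∈ Q → ({v + 1, v + 3} : Set ℕ) ∈ Q →
      (vh = v ∨ vh = v + 3) := by
  intro v hv hq1' hq2'
  have hq1 : pq Q v (v + 2) := hq1'
  have hq2 : pq Q (v + 1) (v + 3) := hq2'
  by_contra hcon
  push_neg at hcon
  obtain ⟨h1, h2⟩ := hcon
  have hvn3 : v + 3 < n := (C.hne hq2).2.2
  have np4 : ∀ w, pq Q v w → w = v + 2 := fun w h => C.hu h hq1 (fun he => h1 he.symm)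
  have np5 : ∀ w, pq Q (v + 3) w → w = v + 1 :=
    fun w h => C.hu h (pq_comm hq2) (fun he => h2 he.symm)
  have np1 : ¬ pq Q v (v + 1) := fun h => by have := np4 _ h; omega
  have np3 : ¬ pq Q (v + 2) (v + 3) := fun h => by have := np5 _ (pq_comm h); omega
  have hmod : IsModuleOn Q (Set.Iio n) ({v, v + 3} : Set ℕ) := by
    refine module_of (by
      intro z hz
      simp only [Set.mem_insert_iff, Set.mem_singleton_iff] at hz
      rcases hz with rfl | rfl <;> exact Set.mem_Iio.mpr (by omega)) ?_
    intro w hw hwM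
    have hwv : w ≠ v := fun h => hwM (h ▸ (by simp))
    have hwv3 : w ≠ v + 3 := fun h => hwM (h ▸ (by simp))
    by_cases hwa : w = v + 1
    · subst hwa
      right
      intro x hx
      rcases hx with rfl | hx
      · exact Or.inl ⟨by omega, np1⟩
      · rw [Set.mem_singleton_iff] at hx; subst hx
        exact Or.inr ⟨by omega, pq_comm hq2⟩
    · by_cases hwb : w = v + 2
      · subst hwb
        left
        intro x hx
        rcases hx with rfl | hx
        · exact Or.inr ⟨by omega, pq_comm hq1⟩
        · rw [Set.mem_singleton_iff] at hx; subst hx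
          exact Or.inl ⟨by omega, np3⟩
      · have npa : ¬ pq Q w v := fun h => hwb (np4 w (pq_comm h))
        have npb : ¬ pq Q w (v + 3) := fun h => hwa (np5 w (pq_comm h))
        rcases (by omega : w < v ∨ v + 3 < w) with hs | hs
        · left
          intro x hx
          rcases hx with rfl | hx
          · exact Or.inl ⟨hs, npa⟩
          · rw [Set.mem_singleton_iff] at hx; subst hx
            exact Or.inl ⟨by omega, npb⟩
        · right
          intro x hx
          rcases hx with rfl | hx
          · exact Or.inl ⟨by omega, fun h => npa (pq_comm h)⟩
          · rw [Set.mem_singleton_iff] at hx; subst hx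
            exact Or.inl ⟨hs, fun h => npb (pq_comm h)⟩
  exact nontrivial_pair hn (by omega : v ≠ v + 3) (hInd _ hmod)

end Forward
section Forward2

variable {n : ℕ} {Q : Set (Set ℕ)} {vh vm vp : ℕ}

lemma fw_c4 (hn : 5 ≤ n) (C : Ctx n Q vh vm vp)
    (hInd : IndecomposableOn Q (Set.Iio n)) :
    ∀ v, v < n → ({v, v + 1} : Set ℕ) ∈ Q →
      (vh = v ∨ vh = v + 1) ∧ 1 ≤ vh ∧ vh - 1 ∈ ⋃₀ Q ∧ vh + 1 ∈ ⋃₀ Q := by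
  intro v hv hq'
  have hq : pq Q v (v + 1) := hq'
  have hv1n : v + 1 < n := (C.hne hq).2.2
  -- step 1 : vh ∈ {v, v+1}
  have step1 : vh = v ∨ vh = v + 1 := by
    by_contra hcon
    push_neg at hcon
    obtain ⟨h1, h2⟩ := hcon
    have npv : ∀ w, pq Q v w → w = v + 1 := fun w h => C.hu h hq (fun he => h1 he.symm)
    have npv1 : ∀ w, pq Q (v + 1) w → w = v :=
      fun w h => C.hu h (pq_comm hq) (fun he => h2 he.symm)
    have hmod : IsModuleOn Q (Set.Iio n) ({v, v + 1} : Set ℕ) := by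
      refine module_of (by
        intro z hz
        simp only [Set.mem_insert_iff, Set.mem_singleton_iff] at hz
        rcases hz with rfl | rfl <;> exact Set.mem_Iio.mpr (by omega)) ?_
      intro w hw hwM
      have hwv : w ≠ v := fun h => hwM (h ▸ (by simp))
      have hwv1 : w ≠ v + 1 := fun h => hwM (h ▸ (by simp))
      have npa : ¬ pq Q w v := fun h => by have := npv w (pq_comm h); omega
      have npb : ¬ pq Q w (v + 1) := fun h => by have := npv1 w (pq_comm h); omega
      rcases (by omega : w < v ∨ v + 1 < w) with hs | hs
      · left
        intro x hx
        rcases hx with rfl | hx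
        · exact Or.inl ⟨hs, npa⟩
        · rw [Set.mem_singleton_iff] at hx; subst hx
          exact Or.inl ⟨by omega, npb⟩
      · right
        intro x hx
        rcases hx with rfl | hx
        · exact Or.inl ⟨by omega, fun h => npa (pq_comm h)⟩
        · rw [Set.mem_singleton_iff] at hx; subst hx
          exact Or.inl ⟨hs, fun h => npb (pq_comm h)⟩
    exact nontrivial_pair hn (by omega : v ≠ v + 1) (hInd _ hmod)
  -- step 2 : 1 ≤ vh
  have step2 : 1 ≤ vh := by
    by_contra hcon
    have hvh0 : vh = 0 := by omega
    have hv0 : v = 0 := by omega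
    subst hv0
    have hmod : IsModuleOn Q (Set.Iio n) (Set.Iio n \ ({1} : Set ℕ)) := by
      refine module_of Set.diff_subset ?_
      intro w hw hwM
      have hw1 : w = 1 := by
        by_contra h
        exact hwM ⟨Set.mem_Iio.mpr hw, by simpa using h⟩
      subst hw1
      left
      intro x hx
      obtain ⟨hxn, hx1⟩ := hx
      have hx1' : x ≠ 1 := by simpa using hx1
      rcases Nat.eq_zero_or_pos x with rfl | hxpos
      · exact Or.inr ⟨by omega, pq_comm hq⟩
      · refine Or.inl ⟨by omega, fun h => ?_⟩
        have := C.hu h (pq_comm hq) (by omega)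
        omega
    exact nontrivial_compl hn (by omega : (1 : ℕ) < n) (hInd _ hmod)
  -- step 3 : vh - 1 ∈ S
  have step3 : vh - 1 ∈ ⋃₀ Q := by
    by_contra hS1
    rcases step1 with hA | hA
    · -- vh = v, pq vh (vh+1)
      subst hA
      have hmod : IsModuleOn Q (Set.Iio n) ({vh - 1, vh + 1} : Set ℕ) := by
        refine module_of (by
          intro z hz
          simp only [Set.mem_insert_iff, Set.mem_singleton_iff] at hz
          rcases hz with rfl | rfl <;> exact Set.mem_Iio.mpr (by omega)) ?_
        intro w hw hwM
        have hwa : w ≠ vh - 1 := fun h => hwM (h ▸ (by simp))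
        have hwb : w ≠ vh + 1 := fun h => hwM (h ▸ (by simp))
        have npa : ∀ u, ¬ pq Q u (vh - 1) :=
          fun u h => hS1 ((mem_S C).2 ⟨u, pq_comm h⟩)
        by_cases hwh : w = vh
        · right
          intro x hx
          rw [hwh]
          rcases hx with rfl | hx
          · exact Or.inl ⟨by omega, fun h => npa _ (pq_comm h)⟩
          · rw [Set.mem_singleton_iff] at hx; subst hx
            exact Or.inr ⟨by omega, pq_comm hq⟩
        · have npb : ¬ pq Q w (vh + 1) := fun h => by
            have := C.hu (pq_comm h) (pq_comm hq) (by omega)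
            exact hwh this
          rcases (by omega : w < vh - 1 ∨ vh + 1 < w) with hs | hs
          · left
            intro x hx
            rcases hx with rfl | hx
            · exact Or.inl ⟨hs, fun h => npa w (pq_comm (pq_comm h))⟩
            · rw [Set.mem_singleton_iff] at hx; subst hx
              exact Or.inl ⟨by omega, npb⟩
          · right
            intro x hx
            rcases hx with rfl | hx
            · exact Or.inl ⟨by omega, fun h => npa w (pq_comm h)⟩
            · rw [Set.mem_singleton_iff] at hx; subst hx
              exact Or.inl ⟨hs, fun h => npb (pq_comm h)⟩
      exact nontrivial_pair hn (by omega : vh - 1 ≠ vh + 1) (hInd _ hmod)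
    · -- vh = v + 1 : v = vh - 1 ∈ S directly
      have : v ∈ ⋃₀ Q := (pq_mem_S C hq).1
      have hv' : v = vh - 1 := by omega
      exact hS1 (hv' ▸ this)
  -- step 4 : vh + 1 ∈ S
  have step4 : vh + 1 ∈ ⋃₀ Q := by
    by_contra hS2
    rcases step1 with hA | hA
    · subst hA
      exact hS2 ((pq_mem_S C hq).2)
    · -- vh = v + 1, pq (vh-1) vh
      have hq2 : pq Q (vh - 1) vh := by
        have h1 : v = vh - 1 := by omega
        have h2 : v + 1 = vh := by omega
        rw [← h1, ← h2]; exact hq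
      have hvhn : vh < n := by omega
      by_cases hlast : vh + 1 < n
      · have hmod : IsModuleOn Q (Set.Iio n) ({vh - 1, vh + 1} : Set ℕ) := by
          refine module_of (by
            intro z hz
            simp only [Set.mem_insert_iff, Set.mem_singleton_iff] at hz
            rcases hz with rfl | rfl <;> exact Set.mem_Iio.mpr (by omega)) ?_
          intro w hw hwM
          have hwa : w ≠ vh - 1 := fun h => hwM (h ▸ (by simp))
          have hwb : w ≠ vh + 1 := fun h => hwM (h ▸ (by simp))
          have npb : ∀ u, ¬ pq Q u (vh + 1) :=
            fun u h => hS2 ((mem_S C).2 ⟨u, pq_comm h⟩)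
          by_cases hwh : w = vh
          · left
            intro x hx
            rw [hwh]
            rcases hx with rfl | hx
            · exact Or.inr ⟨by omega, pq_comm hq2⟩
            · rw [Set.mem_singleton_iff] at hx; subst hx
              exact Or.inl ⟨by omega, fun h => npb vh h⟩
          · have npa : ¬ pq Q w (vh - 1) := fun h => by
              have := C.hu (pq_comm h) hq2 (by omega)
              exact hwh this
            rcases (by omega : w < vh - 1 ∨ vh + 1 < w) with hs | hs
            · left
              intro x hx
              rcases hx with rfl | hx
              · exact Or.inl ⟨hs, npa⟩
              · rw [Set.mem_singleton_iff] at hx; subst hx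
                exact Or.inl ⟨by omega, npb w⟩
            · right
              intro x hx
              rcases hx with rfl | hx
              · exact Or.inl ⟨by omega, fun h => npa (pq_comm h)⟩
              · rw [Set.mem_singleton_iff] at hx; subst hx
                exact Or.inl ⟨hs, fun h => npb w (pq_comm h)⟩
        exact nontrivial_pair hn (by omega : vh - 1 ≠ vh + 1) (hInd _ hmod)
      · -- vh = n - 1 : vertex vh - 1 is a sink
        have hmod : IsModuleOn Q (Set.Iio n) (Set.Iio n \ ({vh - 1} : Set ℕ)) := by
          refine module_of Set.diff_subset ?_
          intro w hw hwM
          have hw1 : w = vh - 1 := by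
            by_contra h
            exact hwM ⟨Set.mem_Iio.mpr hw, by simpa using h⟩
          subst hw1
          right
          intro x hx
          obtain ⟨hxn, hx1⟩ := hx
          rw [Set.mem_Iio] at hxn
          have hx1' : x ≠ vh - 1 := by simpa using hx1
          by_cases hxvh : x = vh
          · subst hxvh
            exact Or.inr ⟨by omega, pq_comm hq2⟩
          · have hxlt : x < vh - 1 := by omega
            refine Or.inl ⟨hxlt, fun h => ?_⟩
            have := C.hu (pq_comm h) hq2 (by omega)
            omega
        exact nontrivial_compl hn (by omega : vh - 1 < n) (hInd _ hmod)
  exact ⟨step1, step2, step3, step4⟩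

lemma fw_tr (hn : 5 ≤ n) (C : Ctx n Q vh vm vp)
    (hInd : IndecomposableOn Q (Set.Iio n)) :
    TransversalOf (⋃₀ Q) (mcOn (Set.Iio n)) := by
  intro Cset hC
  by_contra hint
  rw [Set.not_nonempty_iff_eq_empty] at hint
  have hdis : ∀ x ∈ Cset, x ∉ ⋃₀ Q := by
    intro x hx hxS
    have : x ∈ (⋃₀ Q) ∩ Cset := ⟨hxS, hx⟩
    rw [hint] at this
    exact this
  obtain ⟨⟨hCsub, hCmod⟩, _⟩ := hC
  rcases hCmod with hM | hM
  · -- Cset itself is a nontrivial module of the transitive tournament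
    have hmod : IsModuleOn Q (Set.Iio n) Cset := by
      refine ⟨hCsub, fun w hw hwC => ?_⟩
      rcases hM.1.2 w hw hwC with h | h
      · left
        intro x hx
        have hnp : ¬ pq Q w x := fun hp => hdis x hx (pq_mem_S C hp).2
        rcases h x hx with ⟨h1, _⟩ | ⟨_, h2⟩
        · exact Or.inl ⟨h1, hnp⟩
        · exact absurd h2 (Set.notMem_empty _)
      · right
        intro x hx
        have hnp : ¬ pq Q x w := fun hp => hdis x hx (pq_mem_S C hp).1
        rcases h x hx with ⟨h1, _⟩ | ⟨_, h2⟩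
        · exact Or.inl ⟨h1, hnp⟩
        · exact absurd h2 (Set.notMem_empty _)
    exact hM.2 (hInd _ hmod)
  · -- the complement is a nontrivial module of the transitive tournament
    have hmod : IsModuleOn Q (Set.Iio n) (Set.Iio n \ Cset) := by
      refine ⟨Set.diff_subset, fun w hw hwC => ?_⟩
      have hwCset : w ∈ Cset := by
        by_contra h
        exact hwC ⟨hw, h⟩
      have hwS : w ∉ ⋃₀ Q := hdis w hwCset
      rcases hM.1.2 w hw hwC with h | h
      · left
        intro x hx
        have hnp : ¬ pq Q w x := fun hp => hwS (pq_mem_S C hp).1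
        rcases h x hx with ⟨h1, _⟩ | ⟨_, h2⟩
        · exact Or.inl ⟨h1, hnp⟩
        · exact absurd h2 (Set.notMem_empty _)
      · right
        intro x hx
        have hnp : ¬ pq Q x w := fun hp => hwS (pq_mem_S C hp).2
        rcases h x hx with ⟨h1, _⟩ | ⟨_, h2⟩
        · exact Or.inl ⟨h1, hnp⟩
        · exact absurd h2 (Set.notMem_empty _)
    exact hM.2 (hInd _ hmod)

lemma fw_irr (hn : 5 ≤ n) (C : Ctx n Q vh vm vp)
    (hInd : IndecomposableOn Q (Set.Iio n)) :
    IrreducibleOn (⋃₀ Q) (QPart Q vh vm vp) := by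
  intro R hR hNI
  obtain ⟨⟨hIsub, hIint⟩, hInontriv⟩ := hNI
  have hInontriv' : ¬ (⋃₀ R = ∅ ∨ (∃ a : ℕ, ⋃₀ R = {a}) ∨ ⋃₀ R = ⋃₀ Q) := hInontriv
  push_neg at hInontriv'
  obtain ⟨hI0, hI1, hI2⟩ := hInontriv'
  have hIfin : (⋃₀ R).Finite := C.hSfin.subset hIsub
  have hIne : (⋃₀ R).Nonempty := hI0
  set I := ⋃₀ R with hIdef
  -- min and max of I
  have hcI : sInf I ∈ I := Nat.sInf_mem hIne
  set c := sInf I with hcdef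
  have hcmin : ∀ x ∈ I, c ≤ x := fun x hx => Nat.sInf_le hx
  obtain ⟨d, hdI, hdmax'⟩ := Set.Finite.exists_maximalFor id I hIfin hIne
  have hdmax : ∀ x ∈ I, x ≤ d := by
    intro x hx
    by_contra h
    have h1 : d ≤ x := by omega
    have := hdmax' hx h1
    simp only [id] at this
    omega
  -- closure of I under pairing
  have hcl : ∀ x ∈ I, ∀ w, pq Q x w → w ∈ I := by
    intro x hxI w hxw
    obtain ⟨B, hBR, hxB⟩ := hxI
    rcases hR hBR with ⟨hBQ, hBne⟩ | hBQ
    · -- ordinary block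
      simp only [Set.mem_insert_iff, Set.mem_singleton_iff] at hBne
      push_neg at hBne
      obtain ⟨z, hz, hBz⟩ := rep_of_mem C hBQ hxB
      have hxz : pq Q x z := by have h' := hBQ; rwa [hBz] at h'
      by_cases hxvh : x = vh
      · subst hxvh
        rcases C.hv hxz with rfl | rfl
        · exact absurd hBz hBne.1
        · exact absurd hBz hBne.2
      · have := C.hu hxw hxz hxvh
        subst this
        exact ⟨B, hBR, hBz ▸ (by simp)⟩
    · -- the merged block {vh, vm, vp}
      rw [Set.mem_singleton_iff] at hBQ
      subst hBQ
      have hmem : ∀ u, u = vh ∨ u = vm ∨ u = vp → u ∈ I := by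
        rintro u (rfl | rfl | rfl) <;> exact ⟨_, hBR, by simp⟩
      simp only [Set.mem_insert_iff, Set.mem_singleton_iff] at hxB
      rcases hxB with rfl | rfl | rfl
      · rcases C.hv hxw with rfl | rfl
        · exact hmem _ (Or.inr (Or.inl rfl))
        · exact hmem _ (Or.inr (Or.inr rfl))
      · have := C.hu hxw (pq_comm C.hm) (C.hne C.hm).1.symm
        subst this
        exact hmem _ (Or.inl rfl)
      · have := C.hu hxw (pq_comm C.hp) (C.hne C.hp).1.symm
        subst this
        exact hmem _ (Or.inl rfl)
  have hcd : c ≤ d := hdmax c hcI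
  have hdn : d < n := S_lt C (hIsub hdI)
  -- S ∩ [c, d] ⊆ I
  have hMS : ∀ x, x ∈ ⋃₀ Q → x ∈ Set.Icc c d → x ∈ I := by
    intro x hxS hxM
    obtain ⟨hx1, hx2⟩ := Set.mem_Icc.mp hxM
    by_contra hxI
    rcases hIint x ⟨hxS, hxI⟩ with h | h
    · have := h c hcI; omega
    · have := h d hdI; omega
  have hmod : IsModuleOn Q (Set.Iio n) (Set.Icc c d) := by
    refine module_of (fun x hx => Set.mem_Iio.mpr (by
      have := (Set.mem_Icc.mp hx).2; omega)) ?_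
    intro w hw hwM
    rw [Set.mem_Icc] at hwM
    push_neg at hwM
    have claim : ∀ x ∈ Set.Icc c d, ¬ pq Q x w := by
      intro x hx hp
      have hxI : x ∈ I := hMS x (pq_mem_S C hp).1 hx
      have hwI : w ∈ I := hcl x hxI w hp
      have : w ∈ Set.Icc c d := Set.mem_Icc.mpr ⟨hcmin w hwI, hdmax w hwI⟩
      rw [Set.mem_Icc] at this
      omega
    rcases (by by_contra hcc; push_neg at hcc; have := hwM hcc.1; omega :
        w < c ∨ d < w) with hs | hs
    · left
      intro x hx
      have h1 := (Set.mem_Icc.mp hx).1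
      exact Or.inl ⟨by omega, fun h => claim x hx (pq_comm h)⟩
    · right
      intro x hx
      have h1 := (Set.mem_Icc.mp hx).2
      exact Or.inl ⟨by omega, claim x hx⟩
  -- nontriviality
  obtain ⟨x, hxI, y, hyI, hxy⟩ := two_of hIne hI1
  have hnt : ¬ IsTrivialSubset (Set.Iio n) (Set.Icc c d) := by
    refine not_trivial_of ⟨c, Set.mem_Icc.mpr ⟨le_refl c, hcd⟩⟩ ?_ ?_
    · intro a hA
      have hx' : x ∈ ({a} : Set ℕ) :=
        hA ▸ Set.mem_Icc.mpr ⟨hcmin x hxI, hdmax x hxI⟩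
      have hy' : y ∈ ({a} : Set ℕ) :=
        hA ▸ Set.mem_Icc.mpr ⟨hcmin y hyI, hdmax y hyI⟩
      rw [Set.mem_singleton_iff] at hx' hy'
      exact hxy (hx'.trans hy'.symm)
    · intro hA
      obtain ⟨s, hsS, hsI⟩ := Set.exists_of_ssubset (Set.ssubset_iff_subset_ne.mpr ⟨hIsub, hI2⟩)
      have hsn : s < n := S_lt C hsS
      have hsM : s ∈ Set.Icc c d := hA.symm ▸ Set.mem_Iio.mpr hsn
      exact hsI (hMS s hsS hsM)
  exact hnt (hInd _ hmod)

end Forward2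
section MC

variable {n : ℕ}

lemma invArc_empty {x y : ℕ} : InvArc (∅ : Set (Set ℕ)) x y ↔ x < y := by
  constructor
  · rintro (⟨h, _⟩ | ⟨_, h⟩)
    · exact h
    · exact absurd h (Set.notMem_empty _)
  · exact fun h => Or.inl ⟨h, Set.notMem_empty _⟩

lemma notco_empty : ¬ IsCoModuleOn (∅ : Set (Set ℕ)) (Set.Iio n) ∅ := by
  rintro ⟨_, h | h⟩
  · exact h.2 (Or.inl rfl)
  · exact h.2 (Or.inr (Or.inr (by rw [Set.diff_empty])))

lemma notco_singleton {i : ℕ} (hi : 0 < i) (hin : i < n - 1) (hn : 2 ≤ n) :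
    ¬ IsCoModuleOn (∅ : Set (Set ℕ)) (Set.Iio n) {i} := by
  rintro ⟨_, h | h⟩
  · exact h.2 (Or.inr (Or.inl ⟨i, rfl⟩))
  · have hiW : i ∈ Set.Iio n := Set.mem_Iio.mpr (by omega)
    have hinot : i ∉ Set.Iio n \ ({i} : Set ℕ) := fun h' => h'.2 rfl
    have hm1 : i - 1 ∈ Set.Iio n \ ({i} : Set ℕ) :=
      ⟨Set.mem_Iio.mpr (by omega), by simp; omega⟩
    have hp1 : i + 1 ∈ Set.Iio n \ ({i} : Set ℕ) :=
      ⟨Set.mem_Iio.mpr (by omega), by simp⟩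
    rcases h.1.2 i hiW hinot with h' | h'
    · have := invArc_empty.mp (h' _ hm1)
      omega
    · have := invArc_empty.mp (h' _ hp1)
      omega

lemma co_pair {i : ℕ} (hn : 5 ≤ n) (hin : i + 1 < n) :
    IsCoModuleOn (∅ : Set (Set ℕ)) (Set.Iio n) ({i, i + 1} : Set ℕ) := by
  refine ⟨?_, Or.inl ⟨⟨?_, ?_⟩, nontrivial_pair hn (by omega)⟩⟩
  · intro x hx
    simp only [Set.mem_insert_iff, Set.mem_singleton_iff] at hx
    rcases hx with rfl | rfl <;> exact Set.mem_Iio.mpr (by omega)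
  · intro x hx
    simp only [Set.mem_insert_iff, Set.mem_singleton_iff] at hx
    rcases hx with rfl | rfl <;> exact Set.mem_Iio.mpr (by omega)
  · intro v hv hvM
    have h1 : v ≠ i := fun h => hvM (h ▸ (by simp))
    have h2 : v ≠ i + 1 := fun h => hvM (h ▸ (by simp))
    rcases (by omega : v < i ∨ i + 1 < v) with hs | hs
    · left
      intro x hx
      rcases hx with rfl | hx
      · exact invArc_empty.mpr hs
      · rw [Set.mem_singleton_iff] at hx; subst hx
        exact invArc_empty.mpr (by omega)
    · right
      intro x hx
      rcases hx with rfl | hx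
      · exact invArc_empty.mpr (by omega)
      · rw [Set.mem_singleton_iff] at hx; subst hx
        exact invArc_empty.mpr hs

lemma mc_pair {i : ℕ} (hn : 5 ≤ n) (hi : 1 ≤ i) (hin : i + 1 ≤ n - 2) :
    ({i, i + 1} : Set ℕ) ∈ mcOn (Set.Iio n) := by
  refine ⟨co_pair hn (by omega), ?_⟩
  intro C hC hCsub
  by_cases hii : i ∈ C
  · by_cases hjj : i + 1 ∈ C
    · apply Set.Subset.antisymm hCsub
      intro x hx
      rcases hx with rfl | hx
      · exact hii
      · rw [Set.mem_singleton_iff] at hx; subst hx; exact hjj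
    · exfalso
      have : C ⊆ ({i} : Set ℕ) := by
        intro x hx
        have := hCsub hx
        rcases this with rfl | h'
        · rfl
        · rw [Set.mem_singleton_iff] at h'; subst h'; exact absurd hx hjj
      rcases Set.subset_singleton_iff_eq.mp this with rfl | rfl
      · exact notco_empty hC
      · exact notco_singleton (by omega) (by omega) (by omega) hC
  · exfalso
    have : C ⊆ ({i + 1} : Set ℕ) := by
      intro x hx
      have := hCsub hx
      rcases this with rfl | h'
      · exact absurd hx hii
      · exact h'
    rcases Set.subset_singleton_iff_eq.mp this with rfl | rfl
    · exact notco_empty hC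
    · exact notco_singleton (by omega) (by omega) (by omega) hC

lemma mc_zero (hn : 5 ≤ n) : ({0} : Set ℕ) ∈ mcOn (Set.Iio n) := by
  have hco : IsCoModuleOn (∅ : Set (Set ℕ)) (Set.Iio n) {0} := by
    refine ⟨by simp only [Set.singleton_subset_iff]; exact Set.mem_Iio.mpr (by omega), Or.inr ⟨⟨Set.diff_subset, ?_⟩, ?_⟩⟩
    · intro v hv hvM
      have hv0 : v = 0 := by
        by_contra h
        exact hvM ⟨hv, by simpa using h⟩
      subst hv0
      left
      intro x hx
      have : x ≠ 0 := by simpa using hx.2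
      exact invArc_empty.mpr (by omega)
    · refine not_trivial_of ⟨1, ⟨Set.mem_Iio.mpr (by omega), by simp⟩⟩ ?_ ?_
      · intro a hA
        have h1 : (1 : ℕ) ∈ ({a} : Set ℕ) := hA ▸ ⟨Set.mem_Iio.mpr (by omega), by simp⟩
        have h2 : (2 : ℕ) ∈ ({a} : Set ℕ) := hA ▸ ⟨Set.mem_Iio.mpr (by omega), by simp⟩
        rw [Set.mem_singleton_iff] at h1 h2
        omega
      · intro hA
        have : (0 : ℕ) ∈ Set.Iio n \ ({0} : Set ℕ) := hA.symm ▸ Set.mem_Iio.mpr (by omega)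
        exact this.2 rfl
  refine ⟨hco, ?_⟩
  intro C hC hCsub
  rcases Set.subset_singleton_iff_eq.mp hCsub with rfl | rfl
  · exact absurd hC notco_empty
  · rfl

lemma mc_last (hn : 5 ≤ n) : ({n - 1} : Set ℕ) ∈ mcOn (Set.Iio n) := by
  have hco : IsCoModuleOn (∅ : Set (Set ℕ)) (Set.Iio n) {n - 1} := by
    refine ⟨by simp only [Set.singleton_subset_iff]; exact Set.mem_Iio.mpr (by omega), Or.inr ⟨⟨Set.diff_subset, ?_⟩, ?_⟩⟩
    · intro v hv hvM
      have hv0 : v = n - 1 := by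
        by_contra h
        exact hvM ⟨hv, by simpa using h⟩
      subst hv0
      right
      intro x hx
      have h1 : x ≠ n - 1 := by simpa using hx.2
      have h2 : x < n := Set.mem_Iio.mp hx.1
      exact invArc_empty.mpr (by omega)
    · refine not_trivial_of ⟨1, ⟨Set.mem_Iio.mpr (by omega), by simp; omega⟩⟩ ?_ ?_
      · intro a hA
        have h1 : (1 : ℕ) ∈ ({a} : Set ℕ) := hA ▸ ⟨Set.mem_Iio.mpr (by omega), by simp; omega⟩
        have h2 : (2 : ℕ) ∈ ({a} : Set ℕ) := hA ▸ ⟨Set.mem_Iio.mpr (by omega), by simp; omega⟩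
        rw [Set.mem_singleton_iff] at h1 h2
        omega
      · intro hA
        have : n - 1 ∈ Set.Iio n \ ({n - 1} : Set ℕ) := hA.symm ▸ Set.mem_Iio.mpr (by omega)
        exact this.2 rfl
  refine ⟨hco, ?_⟩
  intro C hC hCsub
  rcases Set.subset_singleton_iff_eq.mp hCsub with rfl | rfl
  · exact absurd hC notco_empty
  · rfl

end MC
section BackInfra

variable {n : ℕ} {Q : Set (Set ℕ)} {vh vm vp : ℕ}

lemma L1 (C : Ctx n Q vh vm vp) {M : Set ℕ} (hMod : IsModuleOn Q (Set.Iio n) M)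
    {a b : ℕ} (haM : a ∈ M) (hbM : b ∈ M) (hab : a < b)
    (hamin : ∀ x ∈ M, a ≤ x) (hbmax : ∀ x ∈ M, x ≤ b)
    (hMvp : M ≠ ({vm, vp} : Set ℕ)) {x y : ℕ} (hxM : x ∈ M) (hxy : pq Q x y) :
    a ≤ y ∧ y ≤ b := by
  by_contra hcon
  push_neg at hcon
  have hyab : y < a ∨ b < y := by
    by_cases h : a ≤ y
    · exact Or.inr (hcon h)
    · exact Or.inl (by omega)
  have hyM : y ∉ M := by
    intro h
    rcases hyab with h' | h'
    · have := hamin y h; omega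
    · have := hbmax y h; omega
  have hyn : y < n := (C.hne hxy).2.2
  have hall_case : (∀ z ∈ M, pq Q y z) → False := by
    intro hall
    have hyvh : y = vh := by
      by_contra h
      have := C.hu (hall a haM) (hall b hbM) h
      omega
    subst hyvh
    have hMsub : M ⊆ ({vm, vp} : Set ℕ) := by
      intro z hz
      rcases C.hv (hall z hz) with rfl | rfl
      · simp
      · simp
    have hamem : a = vm ∧ b = vp := by
      have h1 := hMsub haM
      have h2 := hMsub hbM
      simp only [Set.mem_insert_iff, Set.mem_singleton_iff] at h1 h2
      have := C.hmp
      rcases h1 with rfl | rfl <;> rcases h2 with h2 | h2 <;> omega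
    obtain ⟨rfl, rfl⟩ := hamem
    refine hMvp (Set.Subset.antisymm hMsub ?_)
    intro z hz
    rcases hz with rfl | hz
    · exact haM
    · rw [Set.mem_singleton_iff] at hz; subst hz; exact hbM
  rcases hMod.2 y (Set.mem_Iio.mpr hyn) hyM with hsend | hrecv
  · rcases hyab with hy | hy
    · rcases hsend x hxM with ⟨h1, h2⟩ | ⟨h1, h2⟩
      · exact h2 (pq_comm hxy)
      · have := hamin x hxM; omega
    · refine hall_case (fun z hz => ?_)
      rcases hsend z hz with ⟨h1, h2⟩ | ⟨h1, h2⟩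
      · have := hbmax z hz; omega
      · exact h2
  · rcases hyab with hy | hy
    · refine hall_case (fun z hz => ?_)
      rcases hrecv z hz with ⟨h1, h2⟩ | ⟨h1, h2⟩
      · have := hamin z hz; omega
      · exact pq_comm h2
    · rcases hrecv x hxM with ⟨h1, h2⟩ | ⟨h1, h2⟩
      · exact h2 hxy
      · have := hbmax x hxM; omega

lemma L2 (C : Ctx n Q vh vm vp) {M : Set ℕ} (hMod : IsModuleOn Q (Set.Iio n) M)
    {a b : ℕ} (haM : a ∈ M) (hbM : b ∈ M) {w : ℕ}
    (hwa : a < w) (hwb : w < b) (hwM : w ∉ M) :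
    (pq Q w a ∧ (∀ z ∈ M, z < w → pq Q w z) ∧ (∀ z ∈ M, w < z → ¬ pq Q w z)) ∨
    (pq Q w b ∧ (∀ z ∈ M, w < z → pq Q w z) ∧ (∀ z ∈ M, z < w → ¬ pq Q w z)) := by
  have hbn : b < n := Set.mem_Iio.mp (hMod.1 hbM)
  have hwn : w < n := by omega
  rcases hMod.2 w (Set.mem_Iio.mpr hwn) hwM with hsend | hrecv
  · left
    refine ⟨?_, ?_, ?_⟩
    · rcases hsend a haM with ⟨h1, _⟩ | ⟨_, h2⟩
      · omega
      · exact h2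
    · intro z hz hzw
      rcases hsend z hz with ⟨h1, _⟩ | ⟨_, h2⟩
      · omega
      · exact h2
    · intro z hz hzw
      rcases hsend z hz with ⟨_, h2⟩ | ⟨h1, _⟩
      · exact h2
      · omega
  · right
    refine ⟨?_, ?_, ?_⟩
    · rcases hrecv b hbM with ⟨h1, _⟩ | ⟨_, h2⟩
      · omega
      · exact pq_comm h2
    · intro z hz hzw
      rcases hrecv z hz with ⟨h1, _⟩ | ⟨_, h2⟩
      · omega
      · exact pq_comm h2
    · intro z hz hzw
      rcases hrecv z hz with ⟨_, h2⟩ | ⟨h1, _⟩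
      · exact fun h' => h2 (pq_comm h')
      · omega

lemma gen_irr (C : Ctx n Q vh vm vp)
    (hirr : IrreducibleOn (⋃₀ Q) (QPart Q vh vm vp)) {c d : ℕ}
    (hclosed : ∀ x ∈ ⋃₀ Q, x ∈ Set.Icc c d → ∀ w, pq Q x w → w ∈ Set.Icc c d) :
    ⋃₀ Q ∩ Set.Icc c d = ∅ ∨ ⋃₀ Q ∩ Set.Icc c d = ⋃₀ Q := by
  set I := ⋃₀ Q ∩ Set.Icc c d with hI
  set R := {B ∈ QPart Q vh vm vp | B ⊆ Set.Icc c d} with hR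
  have hRsub : R ⊆ QPart Q vh vm vp := Set.sep_subset _ _
  have hvhS : vh ∈ ⋃₀ Q := (pq_mem_S C C.hm).1
  have hvmS : vm ∈ ⋃₀ Q := (pq_mem_S C C.hm).2
  have hvpS : vp ∈ ⋃₀ Q := (pq_mem_S C C.hp).2
  have hQP_S : ∀ B ∈ QPart Q vh vm vp, B ⊆ ⋃₀ Q := by
    intro B hB x hx
    rcases hB with ⟨hBQ, _⟩ | hBQ
    · exact ⟨B, hBQ, hx⟩
    · rw [Set.mem_singleton_iff] at hBQ
      subst hBQ
      simp only [Set.mem_insert_iff, Set.mem_singleton_iff] at hx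
      rcases hx with rfl | rfl | rfl <;> assumption
  have hUn : ⋃₀ R = I := by
    ext x
    constructor
    · rintro ⟨B, ⟨hBQP, hBsub⟩, hxB⟩
      exact ⟨hQP_S B hBQP hxB, hBsub hxB⟩
    · rintro ⟨hxS, hxIcc⟩
      by_cases hx3 : x = vh ∨ x = vm ∨ x = vp
      · have hBQP : ({vh, vm, vp} : Set ℕ) ∈ QPart Q vh vm vp :=
          Set.mem_union_right _ rfl
        have h3Icc : vh ∈ Set.Icc c d ∧ vm ∈ Set.Icc c d ∧ vp ∈ Set.Icc c d := by
          rcases hx3 with rfl | rfl | rfl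
          · exact ⟨hxIcc, hclosed x hxS hxIcc vm C.hm, hclosed x hxS hxIcc vp C.hp⟩
          · have hvhIcc : vh ∈ Set.Icc c d := hclosed x hxS hxIcc vh (pq_comm C.hm)
            exact ⟨hvhIcc, hxIcc, hclosed vh hvhS hvhIcc vp C.hp⟩
          · have hvhIcc : vh ∈ Set.Icc c d := hclosed x hxS hxIcc vh (pq_comm C.hp)
            exact ⟨hvhIcc, hclosed vh hvhS hvhIcc vm C.hm, hxIcc⟩
        refine ⟨{vh, vm, vp}, ⟨hBQP, ?_⟩, ?_⟩
        · intro z hz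
          simp only [Set.mem_insert_iff, Set.mem_singleton_iff] at hz
          rcases hz with rfl | rfl | rfl
          · exact h3Icc.1
          · exact h3Icc.2.1
          · exact h3Icc.2.2
        · simp only [Set.mem_insert_iff, Set.mem_singleton_iff]
          exact hx3
      · push_neg at hx3
        obtain ⟨h1, h2, h3⟩ := hx3
        obtain ⟨y, hxy⟩ := (mem_S C).1 hxS
        have hBne : ({x, y} : Set ℕ) ∉ ({({vh, vm} : Set ℕ), ({vh, vp} : Set ℕ)} :
            Set (Set ℕ)) := by
          intro hB
          rcases hB with hB | hB
          · have : x ∈ ({vh, vm} : Set ℕ) := hB ▸ (by simp : x ∈ ({x, y} : Set ℕ))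
            simp only [Set.mem_insert_iff, Set.mem_singleton_iff] at this
            tauto
          · rw [Set.mem_singleton_iff] at hB
            have : x ∈ ({vh, vp} : Set ℕ) := hB ▸ (by simp : x ∈ ({x, y} : Set ℕ))
            simp only [Set.mem_insert_iff, Set.mem_singleton_iff] at this
            tauto
        refine ⟨{x, y}, ⟨Set.mem_union_left _ ⟨hxy, hBne⟩, ?_⟩, by simp⟩
        intro z hz
        rcases hz with rfl | hz
        · exact hxIcc
        · rw [Set.mem_singleton_iff] at hz; subst hz
          exact hclosed x hxS hxIcc z hxy
  have hint : IsIntervalOf (⋃₀ Q) I := by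
    refine ⟨Set.inter_subset_left, fun v hv => ?_⟩
    have hvIcc : v ∉ Set.Icc c d := fun h => hv.2 ⟨hv.1, h⟩
    rw [Set.mem_Icc] at hvIcc
    push_neg at hvIcc
    by_cases hvc : v < c
    · left
      intro i hi
      have := (Set.mem_Icc.mp hi.2).1
      omega
    · right
      intro i hi
      have h1 := (Set.mem_Icc.mp hi.2).2
      have h2 : d < v := hvIcc (by omega)
      omega
  have htriv : IsTrivialSubset (⋃₀ Q) I := by
    by_contra h
    exact (hirr R hRsub) (by rw [hUn]; exact ⟨hint, h⟩)
  rcases htriv with h | ⟨x0, h⟩ | h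
  · exact Or.inl h
  · exfalso
    have hx0I : x0 ∈ I := h ▸ rfl
    obtain ⟨y, hxy⟩ := (mem_S C).1 hx0I.1
    have hyI : y ∈ I := ⟨(pq_mem_S C hxy).2, hclosed x0 hx0I.1 hx0I.2 y hxy⟩
    have : y = x0 := by rw [h] at hyI; exact hyI
    exact (C.hne hxy).1 this.symm
  · exact Or.inr h

end BackInfra
section K2

variable {n : ℕ} {Q : Set (Set ℕ)} {vh vm vp : ℕ}

lemma k2 (hn : 5 ≤ n) (C : Ctx n Q vh vm vp)
    (h0S : 0 ∈ ⋃₀ Q) (hn1S : n - 1 ∈ ⋃₀ Q)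
    (hgap : ∀ i, 1 ≤ i → i + 1 ≤ n - 2 → (i ∈ ⋃₀ Q ∨ i + 1 ∈ ⋃₀ Q))
    (hirr : IrreducibleOn (⋃₀ Q) (QPart Q vh vm vp))
    (hc2 : vm + 2 ≤ vp)
    (hc3 : ∀ v, v < n → pq Q v (v + 2) → pq Q (v + 1) (v + 3) → (vh = v ∨ vh = v + 3))
    (hc4 : ∀ v, v < n → pq Q v (v + 1) →
      (vh = v ∨ vh = v + 1) ∧ 1 ≤ vh ∧ vh - 1 ∈ ⋃₀ Q ∧ vh + 1 ∈ ⋃₀ Q)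
    {a b : ℕ} (hab : a < b) (hbn : b < n)
    (hMod : IsModuleOn Q (Set.Iio n) ({a, b} : Set ℕ))
    (hMvp : ({a, b} : Set ℕ) ≠ ({vm, vp} : Set ℕ)) : False := by
  have haM : a ∈ ({a, b} : Set ℕ) := by simp
  have hbM : b ∈ ({a, b} : Set ℕ) := by simp
  have hamin : ∀ x ∈ ({a, b} : Set ℕ), a ≤ x := by
    intro x hx
    rcases hx with rfl | hx
    · omega
    · rw [Set.mem_singleton_iff] at hx; omega
  have hbmax : ∀ x ∈ ({a, b} : Set ℕ), x ≤ b := by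
    intro x hx
    rcases hx with rfl | hx
    · omega
    · rw [Set.mem_singleton_iff] at hx; omega
  have hpa : ∀ {y}, pq Q a y → a ≤ y ∧ y ≤ b :=
    fun {y} h => L1 C hMod haM hbM hab hamin hbmax hMvp haM h
  have hpb : ∀ {y}, pq Q b y → a ≤ y ∧ y ≤ b :=
    fun {y} h => L1 C hMod haM hbM hab hamin hbmax hMvp hbM h
  -- interior classification
  have hint : ∀ w, a < w → w < b →
      (pq Q w a ∧ ¬ pq Q w b) ∨ (pq Q w b ∧ ¬ pq Q w a) := by
    intro w hwa hwb
    have hwM : w ∉ ({a, b} : Set ℕ) := by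
      intro h
      rcases h with rfl | h
      · omega
      · rw [Set.mem_singleton_iff] at h; omega
    rcases L2 C hMod haM hbM hwa hwb hwM with ⟨h1, _, h3⟩ | ⟨h1, _, h3⟩
    · exact Or.inl ⟨h1, h3 b hbM hwb⟩
    · exact Or.inr ⟨h1, h3 a haM hwa⟩
  have hAA : ∀ w1 w2, pq Q w1 a → pq Q w2 a → w1 ≠ w2 →
      a = vh ∧ (w1 = vm ∨ w1 = vp) ∧ (w2 = vm ∨ w2 = vp) := by
    intro w1 w2 h1 h2 h12
    by_cases ha : a = vh
    · exact ⟨ha, C.hv (by rw [← ha]; exact pq_comm h1),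
        C.hv (by rw [← ha]; exact pq_comm h2)⟩
    · exact absurd (C.hu (pq_comm h1) (pq_comm h2) ha) h12
  have hBB : ∀ w1 w2, pq Q w1 b → pq Q w2 b → w1 ≠ w2 →
      b = vh ∧ (w1 = vm ∨ w1 = vp) ∧ (w2 = vm ∨ w2 = vp) := by
    intro w1 w2 h1 h2 h12
    by_cases hb : b = vh
    · exact ⟨hb, C.hv (by rw [← hb]; exact pq_comm h1),
        C.hv (by rw [← hb]; exact pq_comm h2)⟩
    · exact absurd (C.hu (pq_comm h1) (pq_comm h2) hb) h12
  have hA2 : ∀ w1 w2 w3, pq Q w1 a → pq Q w2 a → pq Q w3 a →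
      w1 = w2 ∨ w1 = w3 ∨ w2 = w3 := by
    intro w1 w2 w3 h1 h2 h3
    by_contra hcon
    push_neg at hcon
    obtain ⟨e1, m1, m2⟩ := hAA w1 w2 h1 h2 hcon.1
    obtain ⟨_, _, m3⟩ := hAA w1 w3 h1 h3 hcon.2.1
    rcases m1 with rfl | rfl <;> rcases m2 with h | h <;> rcases m3 with h' | h' <;> omega
  have hB2 : ∀ w1 w2 w3, pq Q w1 b → pq Q w2 b → pq Q w3 b →
      w1 = w2 ∨ w1 = w3 ∨ w2 = w3 := by
    intro w1 w2 w3 h1 h2 h3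
    by_contra hcon
    push_neg at hcon
    obtain ⟨e1, m1, m2⟩ := hBB w1 w2 h1 h2 hcon.1
    obtain ⟨_, _, m3⟩ := hBB w1 w3 h1 h3 hcon.2.1
    rcases m1 with rfl | rfl <;> rcases m2 with h | h <;> rcases m3 with h' | h' <;> omega
  -- bound : b ≤ a + 4
  have hbound : b ≤ a + 4 := by
    by_contra hcon
    push_neg at hcon
    have t1 := hint (a + 1) (by omega) (by omega)
    have t2 := hint (a + 2) (by omega) (by omega)
    have t3 := hint (a + 3) (by omega) (by omega)
    have t4 := hint (a + 4) (by omega) (by omega)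
    rcases t1 with ⟨q1, _⟩ | ⟨q1, _⟩ <;> rcases t2 with ⟨q2, _⟩ | ⟨q2, _⟩ <;>
      rcases t3 with ⟨q3, _⟩ | ⟨q3, _⟩ <;> rcases t4 with ⟨q4, _⟩ | ⟨q4, _⟩
    · rcases hA2 _ _ _ q1 q2 q3 with h | h | h <;> omega
    · rcases hA2 _ _ _ q1 q2 q3 with h | h | h <;> omega
    · rcases hA2 _ _ _ q1 q2 q4 with h | h | h <;> omega
    · obtain ⟨e1, -, -⟩ := hAA _ _ q1 q2 (by omega)
      obtain ⟨e2, -, -⟩ := hBB _ _ q3 q4 (by omega)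
      omega
    · rcases hA2 _ _ _ q1 q3 q4 with h | h | h <;> omega
    · obtain ⟨e1, -, -⟩ := hAA _ _ q1 q3 (by omega)
      obtain ⟨e2, -, -⟩ := hBB _ _ q2 q4 (by omega)
      omega
    · obtain ⟨e1, -, -⟩ := hAA _ _ q1 q4 (by omega)
      obtain ⟨e2, -, -⟩ := hBB _ _ q2 q3 (by omega)
      omega
    · rcases hB2 _ _ _ q2 q3 q4 with h | h | h <;> omega
    · rcases hA2 _ _ _ q2 q3 q4 with h | h | h <;> omega
    · obtain ⟨e1, -, -⟩ := hAA _ _ q2 q3 (by omega)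
      obtain ⟨e2, -, -⟩ := hBB _ _ q1 q4 (by omega)
      omega
    · obtain ⟨e1, -, -⟩ := hAA _ _ q2 q4 (by omega)
      obtain ⟨e2, -, -⟩ := hBB _ _ q1 q3 (by omega)
      omega
    · rcases hB2 _ _ _ q1 q3 q4 with h | h | h <;> omega
    · obtain ⟨e1, -, -⟩ := hAA _ _ q3 q4 (by omega)
      obtain ⟨e2, -, -⟩ := hBB _ _ q1 q2 (by omega)
      omega
    · rcases hB2 _ _ _ q1 q2 q4 with h | h | h <;> omega
    · rcases hB2 _ _ _ q1 q2 q3 with h | h | h <;> omega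
    · rcases hB2 _ _ _ q1 q2 q3 with h | h | h <;> omega
  have hcases : b = a + 1 ∨ b = a + 2 ∨ b = a + 3 ∨ b = a + 4 := by omega
  have hm' := C.hm
  have hp' := C.hp
  have hmp := C.hmp
  rcases hcases with hb1 | hb2 | hb3 | hb4
  · -- b = a + 1
    subst hb1
    by_cases haS : a ∈ ⋃₀ Q
    · obtain ⟨y, hay⟩ := (mem_S C).1 haS
      have hy := hpa hay
      have hyne := (C.hne hay).1
      have hyeq : y = a + 1 := by omega
      subst hyeq
      obtain ⟨hA, _, _, _⟩ := hc4 a (by omega) hay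
      rcases hA with hA | hA
      · rw [hA] at hm' hp'
        have h1 := hpa hm'
        have h2 := hpa hp'
        have e1 := (C.hne hm').1
        have e2 := (C.hne hp').1
        omega
      · rw [hA] at hm' hp'
        have h1 := hpb hm'
        have h2 := hpb hp'
        have e1 := (C.hne hm').1
        have e2 := (C.hne hp').1
        omega
    · by_cases hbS : a + 1 ∈ ⋃₀ Q
      · obtain ⟨y, hby⟩ := (mem_S C).1 hbS
        have hy := hpb hby
        have hyne := (C.hne hby).1
        have hyeq : y = a := by omega
        subst hyeq
        exact haS ((pq_mem_S C (pq_comm hby)).1)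
      · -- both a and a+1 outside S
        by_cases ha0 : a = 0
        · exact haS (ha0 ▸ h0S)
        · by_cases hblast : a + 1 = n - 1
          · exact hbS (hblast ▸ hn1S)
          · rcases hgap a (by omega) (by omega) with h | h
            · exact haS h
            · exact hbS h
  · -- b = a + 2
    subst hb2
    rcases hint (a + 1) (by omega) (by omega) with ⟨hq1, hnq⟩ | ⟨hq1, hnq⟩
    · -- pq (a+1) a
      have hq : pq Q a (a + 1) := pq_comm hq1
      obtain ⟨hA, _, _, h4⟩ := hc4 a (by omega) hq
      rcases hA with hA | hA
      · -- vh = a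
        rw [hA] at hm' hp'
        have h1 := hpa hm'
        have h2 := hpa hp'
        have e1 := (C.hne hm').1
        have e2 := (C.hne hp').1
        omega
      · -- vh = a + 1
        -- h4 : vh + 1 = a + 2 ∈ S
        have ha2S : a + 2 ∈ ⋃₀ Q := by rw [hA] at h4; exact h4
        obtain ⟨y, hy2⟩ := (mem_S C).1 ha2S
        have hy := hpb hy2
        have hyne := (C.hne hy2).1
        have hyeq : y = a ∨ y = a + 1 := by omega
        rcases hyeq with rfl | rfl
        · -- pq (a+2) a and pq a (a+1) : a has two partners, a ≠ vh
          have := C.hu (pq_comm hy2) hq (by omega)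
          omega
        · -- pq (a+2) (a+1) : a+1 = vh has partners a and a+2
          have hm1 : a ∈ ({vm, vp} : Set ℕ) := by
            have := C.hv (hA ▸ hq1)
            simpa using this
          have hm2 : a + 2 ∈ ({vm, vp} : Set ℕ) := by
            have := C.hv (hA ▸ (pq_comm hy2))
            simpa using this
          simp only [Set.mem_insert_iff, Set.mem_singleton_iff] at hm1 hm2
          have : vm = a ∧ vp = a + 2 := by omega
          exact hMvp (by rw [this.1, this.2])
    · -- pq (a+1) (a+2)
      have hq : pq Q (a + 1) (a + 2) := hq1
      obtain ⟨hA, _, h3, _⟩ := hc4 (a + 1) (by omega) hq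
      rcases hA with hA | hA
      · -- vh = a + 1 : show a ∉ S, contradict h3
        have haS : a ∉ ⋃₀ Q := by
          intro haS
          obtain ⟨y, hay⟩ := (mem_S C).1 haS
          have hy := hpa hay
          have hyne := (C.hne hay).1
          have hyeq : y = a + 1 ∨ y = a + 2 := by omega
          rcases hyeq with rfl | rfl
          · exact hnq (pq_comm hay)
          · have := C.hu (pq_comm hay) (pq_comm hq) (by omega)
            omega
        rw [hA] at h3
        simp only [Nat.add_sub_cancel] at h3
        exact haS h3
      · -- vh = a + 2
        rw [hA] at hm' hp'
        have h1 := hpb hm'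
        have h2 := hpb hp'
        have e1 := (C.hne hm').1
        have e2 := (C.hne hp').1
        omega
  · -- b = a + 3
    subst hb3
    rcases hint (a + 1) (by omega) (by omega) with ⟨s1, ns1⟩ | ⟨s1, ns1⟩ <;>
      rcases hint (a + 2) (by omega) (by omega) with ⟨s2, ns2⟩ | ⟨s2, ns2⟩
    · -- A A
      obtain ⟨e1, m1, m2⟩ := hAA _ _ s1 s2 (by omega)
      rcases m1 with h | h <;> rcases m2 with h' | h' <;> omega
    · -- A B : pq (a+1) a, pq (a+2) (a+3)
      have hq1 : pq Q a (a + 1) := pq_comm s1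
      have hq2 : pq Q (a + 2) (a + 3) := s2
      obtain ⟨hA1, _, _, _⟩ := hc4 a (by omega) hq1
      obtain ⟨hA2', _, _, _⟩ := hc4 (a + 2) (by omega) hq2
      omega
    · -- B A : pq (a+1) (a+3), pq (a+2) a
      have hq1 : pq Q a (a + 2) := pq_comm s2
      have hq2 : pq Q (a + 1) (a + 3) := s1
      rcases hc3 a (by omega) hq1 hq2 with hA | hA
      · -- vh = a
        rw [hA] at hm' hp'
        have h1 := hpa hm'
        have h2 := hpa hp'
        have e1 := (C.hne hm').1
        have e2 := (C.hne hp').1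
        have hvm : vm ≠ a + 1 := by
          rintro rfl
          have := C.hu (pq_comm hm') hq2 (by omega)
          omega
        have hvm3 : vm ≠ a + 3 := by
          rintro rfl
          have := C.hu (pq_comm hm') (pq_comm hq2) (by omega)
          omega
        have hvp1 : vp ≠ a + 1 := by
          rintro rfl
          have := C.hu (pq_comm hp') hq2 (by omega)
          omega
        have hvp3 : vp ≠ a + 3 := by
          rintro rfl
          have := C.hu (pq_comm hp') (pq_comm hq2) (by omega)
          omega
        omega
      · -- vh = a + 3
        rw [hA] at hm' hp'
        have h1 := hpb hm'
        have h2 := hpb hp'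
        have e1 := (C.hne hm').1
        have e2 := (C.hne hp').1
        have hvm : vm ≠ a + 2 := by
          rintro rfl
          have := C.hu (pq_comm hm') (pq_comm hq1) (by omega)
          omega
        have hvm0 : vm ≠ a := by
          rintro rfl
          have := C.hu (pq_comm hm') hq1 (by omega)
          omega
        have hvp2 : vp ≠ a + 2 := by
          rintro rfl
          have := C.hu (pq_comm hp') (pq_comm hq1) (by omega)
          omega
        have hvp0 : vp ≠ a := by
          rintro rfl
          have := C.hu (pq_comm hp') hq1 (by omega)
          omega
        omega
    · -- B B
      obtain ⟨e1, m1, m2⟩ := hBB _ _ s1 s2 (by omega)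
      rcases m1 with h | h <;> rcases m2 with h' | h' <;> omega
  · -- b = a + 4
    subst hb4
    rcases hint (a + 1) (by omega) (by omega) with ⟨s1, ns1⟩ | ⟨s1, ns1⟩ <;>
      rcases hint (a + 2) (by omega) (by omega) with ⟨s2, ns2⟩ | ⟨s2, ns2⟩ <;>
      rcases hint (a + 3) (by omega) (by omega) with ⟨s3, ns3⟩ | ⟨s3, ns3⟩
    · -- A A A
      rcases hA2 _ _ _ s1 s2 s3 with h | h | h <;> omega
    · -- A A B
      obtain ⟨e1, m1, m2⟩ := hAA _ _ s1 s2 (by omega)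
      rcases m1 with h | h <;> rcases m2 with h' | h' <;> omega
    · -- A B A : the irreducibility case, vh = a
      obtain ⟨e1, m1, m2⟩ := hAA _ _ s1 s3 (by omega)
      have hvmvp : vm = a + 1 ∧ vp = a + 3 := by
        rcases m1 with h | h <;> rcases m2 with h' | h' <;> omega
      obtain ⟨hvm1, hvp3⟩ := hvmvp
      have hq : pq Q a (a + 1) := pq_comm s1
      obtain ⟨_, h2, h3, _⟩ := hc4 a (by omega) hq
      have ha1 : 1 ≤ a := by omega
      have ham1S : a - 1 ∈ ⋃₀ Q := by
        rw [← e1] at h3; exact h3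
      have haS : a ∈ ⋃₀ Q := by
        have := (pq_mem_S C C.hm).1
        rw [← e1] at this; exact this
      have hclosed : ∀ x ∈ ⋃₀ Q, x ∈ Set.Icc a (a + 4) → ∀ w, pq Q x w →
          w ∈ Set.Icc a (a + 4) := by
        intro x hxS hxIcc w hxw
        rw [Set.mem_Icc] at hxIcc
        have hxv : x = a ∨ x = a + 1 ∨ x = a + 2 ∨ x = a + 3 ∨ x = a + 4 := by omega
        rw [Set.mem_Icc]
        rcases hxv with rfl | rfl | rfl | rfl | rfl
        · rcases C.hv (e1 ▸ hxw) with rfl | rfl <;> omega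
        · have := C.hu hxw s1 (by omega); omega
        · have := C.hu hxw s2 (by omega); omega
        · have := C.hu hxw s3 (by omega); omega
        · have := C.hu hxw (pq_comm s2) (by omega); omega
      rcases gen_irr C hirr hclosed with h | h
      · have : a ∈ ⋃₀ Q ∩ Set.Icc a (a + 4) := ⟨haS, Set.mem_Icc.mpr (by omega)⟩
        rw [h] at this
        exact this
      · have : a - 1 ∈ ⋃₀ Q ∩ Set.Icc a (a + 4) := h.symm ▸ ham1S
        have := (Set.mem_Icc.mp this.2).1
        omega
    · -- A B B
      obtain ⟨e1, m1, m2⟩ := hBB _ _ s2 s3 (by omega)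
      rcases m1 with h | h <;> rcases m2 with h' | h' <;> omega
    · -- B A A
      obtain ⟨e1, m1, m2⟩ := hAA _ _ s2 s3 (by omega)
      rcases m1 with h | h <;> rcases m2 with h' | h' <;> omega
    · -- B A B : mirror irreducibility case, vh = a + 4
      obtain ⟨e1, m1, m2⟩ := hBB _ _ s1 s3 (by omega)
      have hvmvp : vm = a + 1 ∧ vp = a + 3 := by
        rcases m1 with h | h <;> rcases m2 with h' | h' <;> omega
      obtain ⟨hvm1, hvp3⟩ := hvmvp
      have hq : pq Q (a + 3) (a + 4) := s3
      obtain ⟨_, _, _, h4⟩ := hc4 (a + 3) (by omega) hq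
      have ha5S : a + 5 ∈ ⋃₀ Q := by
        rw [← e1] at h4; exact h4
      have hbS : a + 4 ∈ ⋃₀ Q := by
        have := (pq_mem_S C C.hm).1
        rw [← e1] at this; exact this
      have hclosed : ∀ x ∈ ⋃₀ Q, x ∈ Set.Icc a (a + 4) → ∀ w, pq Q x w →
          w ∈ Set.Icc a (a + 4) := by
        intro x hxS hxIcc w hxw
        rw [Set.mem_Icc] at hxIcc
        have hxv : x = a ∨ x = a + 1 ∨ x = a + 2 ∨ x = a + 3 ∨ x = a + 4 := by omega
        rw [Set.mem_Icc]
        rcases hxv with rfl | rfl | rfl | rfl | rfl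
        · have := C.hu hxw (pq_comm s2) (by omega); omega
        · have := C.hu hxw s1 (by omega); omega
        · have := C.hu hxw s2 (by omega); omega
        · have := C.hu hxw s3 (by omega); omega
        · rcases C.hv (e1 ▸ hxw) with rfl | rfl <;> omega
      rcases gen_irr C hirr hclosed with h | h
      · have : a + 4 ∈ ⋃₀ Q ∩ Set.Icc a (a + 4) := ⟨hbS, Set.mem_Icc.mpr (by omega)⟩
        rw [h] at this
        exact this
      · have : a + 5 ∈ ⋃₀ Q ∩ Set.Icc a (a + 4) := h.symm ▸ ha5S
        have := (Set.mem_Icc.mp this.2).2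
        omega
    · -- B B A
      obtain ⟨e1, m1, m2⟩ := hBB _ _ s1 s2 (by omega)
      rcases m1 with h | h <;> rcases m2 with h' | h' <;> omega
    · -- B B B
      rcases hB2 _ _ _ s1 s2 s3 with h | h | h <;> omega

end K2
section Backward

variable {n : ℕ} {Q : Set (Set ℕ)} {vh vm vp : ℕ}

lemma backward (hn : 5 ≤ n) (C : Ctx n Q vh vm vp)
    (h0S : 0 ∈ ⋃₀ Q) (hn1S : n - 1 ∈ ⋃₀ Q)
    (hgap : ∀ i, 1 ≤ i → i + 1 ≤ n - 2 → (i ∈ ⋃₀ Q ∨ i + 1 ∈ ⋃₀ Q))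
    (hirr : IrreducibleOn (⋃₀ Q) (QPart Q vh vm vp))
    (hc2 : vm + 2 ≤ vp)
    (hc3 : ∀ v, v < n → pq Q v (v + 2) → pq Q (v + 1) (v + 3) → (vh = v ∨ vh = v + 3))
    (hc4 : ∀ v, v < n → pq Q v (v + 1) →
      (vh = v ∨ vh = v + 1) ∧ 1 ≤ vh ∧ vh - 1 ∈ ⋃₀ Q ∧ vh + 1 ∈ ⋃₀ Q) :
    IndecomposableOn Q (Set.Iio n) := by
  intro M hMod
  by_contra hnt
  have hnt' : ¬ (M = ∅ ∨ (∃ a : ℕ, M = {a}) ∨ M = Set.Iio n) := hnt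
  push_neg at hnt'
  obtain ⟨hM0, hM1, hM2⟩ := hnt'
  have hMne : M.Nonempty := hM0
  have hMsub := hMod.1
  obtain ⟨a, haM, hamin⟩ : ∃ a ∈ M, ∀ x ∈ M, a ≤ x :=
    ⟨sInf M, Nat.sInf_mem hMne, fun x hx => Nat.sInf_le hx⟩
  have hMfin : M.Finite := (Set.finite_Iio n).subset hMsub
  obtain ⟨b, hbM, hbmax⟩ : ∃ b ∈ M, ∀ x ∈ M, x ≤ b := by
    obtain ⟨b, hbM, hb'⟩ := Set.Finite.exists_maximalFor id M hMfin hMne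
    refine ⟨b, hbM, fun x hx => ?_⟩
    by_contra h
    have h1 : b ≤ x := by omega
    have := hb' hx h1
    simp only [id] at this
    omega
  obtain ⟨x0, hx0, y0, hy0, hxy0⟩ := two_of hMne hM1
  have hab : a < b := by
    have h1 := hamin x0 hx0; have h2 := hamin y0 hy0
    have h3 := hbmax x0 hx0; have h4 := hbmax y0 hy0
    omega
  have hbn : b < n := Set.mem_Iio.mp (hMsub hbM)
  have hvhm := (C.hne C.hm).1
  have hvhp := (C.hne C.hp).1
  have hvmn := (C.hne C.hm).2.2
  have hvpn := (C.hne C.hp).2.2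
  have hvhn := (C.hne C.hm).2.1
  have hmp := C.hmp
  -- CASE I : M = {vm, vp}
  by_cases hMvp : M = ({vm, vp} : Set ℕ)
  · have hvmM : vm ∈ M := by rw [hMvp]; simp
    have hvpM : vp ∈ M := by rw [hMvp]; simp
    have hwM : vm + 1 ∉ M := by
      rw [hMvp]
      intro h
      rcases h with h | h
      · omega
      · rw [Set.mem_singleton_iff] at h; omega
    have hwn : vm + 1 < n := by omega
    rcases hMod.2 (vm + 1) (Set.mem_Iio.mpr hwn) hwM with hsend | hrecv
    · rcases hsend vm hvmM with ⟨h1, h2⟩ | ⟨h1, h2⟩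
      · omega
      · have hwvh : vm + 1 = vh := C.hu (pq_comm h2) (pq_comm C.hm) (Ne.symm hvhm)
        rcases hsend vp hvpM with ⟨h3, h4⟩ | ⟨h3, h4⟩
        · exact h4 (by rw [hwvh]; exact C.hp)
        · omega
    · rcases hrecv vp hvpM with ⟨h1, h2⟩ | ⟨h1, h2⟩
      · omega
      · have hwvh : vm + 1 = vh := C.hu h2 (pq_comm C.hp) (Ne.symm hvhp)
        rcases hrecv vm hvmM with ⟨h3, h4⟩ | ⟨h3, h4⟩
        · exact h4 (by rw [hwvh]; exact pq_comm C.hm)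
        · omega
  -- now M ≠ {vm, vp}
  have L1' : ∀ {x y : ℕ}, x ∈ M → pq Q x y → a ≤ y ∧ y ≤ b :=
    fun {x y} hx hxy => L1 C hMod haM hbM hab hamin hbmax hMvp hx hxy
  have L2' : ∀ {w : ℕ}, a < w → w < b → w ∉ M →
      (pq Q w a ∧ (∀ z ∈ M, z < w → pq Q w z) ∧ (∀ z ∈ M, w < z → ¬ pq Q w z)) ∨
      (pq Q w b ∧ (∀ z ∈ M, w < z → pq Q w z) ∧ (∀ z ∈ M, z < w → ¬ pq Q w z)) :=
    fun {w} h1 h2 h3 => L2 C hMod haM hbM h1 h2 h3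
  by_cases hfull : a = 0 ∧ b = n - 1
  · -- CASE β : a = 0 and b = n - 1
    obtain ⟨ha0, hbn1⟩ := hfull
    subst ha0
    obtain ⟨t0, ht0n, ht0M⟩ : ∃ t, t ∈ Set.Iio n ∧ t ∉ M :=
      Set.exists_of_ssubset (Set.ssubset_iff_subset_ne.mpr ⟨hMsub, hM2⟩)
    have hWne : ({w : ℕ | w < n ∧ w ∉ M}).Nonempty := ⟨t0, Set.mem_Iio.mp ht0n, ht0M⟩
    have hWfin : ({w : ℕ | w < n ∧ w ∉ M}).Finite :=
      (Set.finite_Iio n).subset (fun x hx => Set.mem_Iio.mpr hx.1)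
    obtain ⟨w0, hw0W, hw0min⟩ :
        ∃ w ∈ {w : ℕ | w < n ∧ w ∉ M}, ∀ x ∈ {w : ℕ | w < n ∧ w ∉ M}, w ≤ x :=
      ⟨sInf _, Nat.sInf_mem hWne, fun x hx => Nat.sInf_le hx⟩
    obtain ⟨w1, hw1W, hw1max⟩ :
        ∃ w ∈ {w : ℕ | w < n ∧ w ∉ M}, ∀ x ∈ {w : ℕ | w < n ∧ w ∉ M}, x ≤ w := by
      obtain ⟨w, hwW, hw'⟩ := Set.Finite.exists_maximalFor id _ hWfin hWne
      refine ⟨w, hwW, fun x hx => ?_⟩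
      by_contra h
      have h1 : w ≤ x := by omega
      have := hw' hx h1
      simp only [id] at this
      omega
    obtain ⟨hw0n, hw0M⟩ := hw0W
    obtain ⟨hw1n, hw1M⟩ := hw1W
    have hw0pos : 0 < w0 := by
      rcases Nat.eq_zero_or_pos w0 with h | h
      · exact absurd (show w0 ∈ M by rw [h]; exact haM) hw0M
      · exact h
    have hw0b : w0 < b := by
      have h1 : w0 ≠ b := fun h => hw0M (h ▸ hbM)
      omega
    have hw1pos : 0 < w1 := by
      rcases Nat.eq_zero_or_pos w1 with h | h
      · exact absurd (show w1 ∈ M by rw [h]; exact haM) hw1M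
      · exact h
    have hw1b : w1 < b := by
      have h1 : w1 ≠ b := fun h => hw1M (h ▸ hbM)
      omega
    have hw01 : w0 ≤ w1 := hw0min w1 ⟨hw1n, hw1M⟩
    have hminM : ∀ z, 0 < z → z < w0 → z ∈ M := by
      intro z h1 h2
      by_contra h
      have := hw0min z ⟨by omega, h⟩
      omega
    have hmaxM : ∀ z, w1 < z → z < n → z ∈ M := by
      intro z h1 h2
      by_contra h
      have := hw1max z ⟨h2, h⟩
      omega
    -- Step 1 : w0 is of receive type
    have hstep1 : pq Q w0 b ∧ (∀ z ∈ M, w0 < z → pq Q w0 z) ∧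
        (∀ z ∈ M, z < w0 → ¬ pq Q w0 z) := by
      rcases L2' hw0pos hw0b hw0M with ⟨hqa, hs2, hs3⟩ | h
      · exfalso
        by_cases hw0vh : w0 = vh
        · have hvm0 : vm = 0 := by
            rcases C.hv (hw0vh ▸ hqa) with h | h <;> omega
          have hsub : ∀ z, 0 < z → z < w0 → z = vp := by
            intro z hz1 hz2
            have hzM := hminM z hz1 hz2
            have hpz := hs2 z hzM hz2
            rcases C.hv (hw0vh ▸ hpz) with h | h <;> omega
          by_cases h1 : w0 = 1
          · have hvpM' : vp ∉ M := by
              intro hvpM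
              exact hs3 vp hvpM (by omega) (hw0vh ▸ C.hp)
            have hvpb : vp < b := by
              have : vp ≠ b := fun h => hvpM' (h ▸ hbM)
              omega
            rcases L2' (show (0:ℕ) < vp by omega) hvpb hvpM' with
              ⟨hq', _, _⟩ | ⟨hq', _, _⟩
            · have := C.hu hq' (pq_comm C.hp) (Ne.symm hvhp)
              omega
            · have := C.hu hq' (pq_comm C.hp) (Ne.symm hvhp)
              omega
          · by_cases h2 : w0 = 2
            · have := hsub 1 (by omega) (by omega)
              omega
            · have e1 := hsub 1 (by omega) (by omega)
              have e2 := hsub 2 (by omega) (by omega)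
              omega
        · have hw0eq : w0 = 1 := by
            by_contra h
            have hzM := hminM 1 (by omega) (by omega)
            have hpz := hs2 1 hzM (by omega)
            have := C.hu hpz hqa hw0vh
            omega
          obtain ⟨hA, hB, _, _⟩ := hc4 0 (by omega) (by
            rw [hw0eq] at hqa
            exact pq_comm hqa)
          omega
      · exact h
    -- Step 2 : w1 is of send type
    have hstep2 : pq Q w1 0 ∧ (∀ z ∈ M, z < w1 → pq Q w1 z) ∧
        (∀ z ∈ M, w1 < z → ¬ pq Q w1 z) := by
      rcases L2' hw1pos hw1b hw1M with h | ⟨hqb, hr2, hr3⟩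
      · exact h
      · exfalso
        by_cases hw1vh : w1 = vh
        · have hbvp : b = vp := by
            rcases C.hv (hw1vh ▸ hqb) with h | h <;> omega
          have hsub : ∀ z, w1 < z → z < b → z = vm := by
            intro z hz1 hz2
            have hzM := hmaxM z hz1 (by omega)
            have hpz := hr2 z hzM hz1
            rcases C.hv (hw1vh ▸ hpz) with h | h <;> omega
          by_cases h1 : w1 = b - 1
          · have hvmw1 : vm < w1 := by omega
            by_cases hvmM : vm ∈ M
            · exact hr3 vm hvmM hvmw1 (hw1vh ▸ C.hm)
            · have hvmpos : 0 < vm := by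
                rcases Nat.eq_zero_or_pos vm with h | h
                · exact absurd (show vm ∈ M by rw [h]; exact haM) hvmM
                · exact h
              have hvmb : vm < b := by omega
              rcases L2' hvmpos hvmb hvmM with ⟨hq', _, _⟩ | ⟨hq', _, _⟩
              · have := C.hu hq' (pq_comm C.hm) (Ne.symm hvhm)
                omega
              · have := C.hu hq' (pq_comm C.hm) (Ne.symm hvhm)
                omega
          · by_cases h2 : w1 = b - 2
            · have := hsub (b - 1) (by omega) (by omega)
              omega
            · have e1 := hsub (w1 + 1) (by omega) (by omega)
              have e2 := hsub (w1 + 2) (by omega) (by omega)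
              omega
        · have hw1b1 : w1 = b - 1 := by
            by_contra h
            have hzM := hmaxM (w1 + 1) (by omega) (by omega)
            have hpz := hr2 (w1 + 1) hzM (by omega)
            have := C.hu hpz hqb hw1vh
            omega
          have hq : pq Q w1 (w1 + 1) := by
            have hb' : b = w1 + 1 := by omega
            rwa [hb'] at hqb
          obtain ⟨hA, _, _, h4⟩ := hc4 w1 (by omega) hq
          have := S_lt C h4
          omega
    obtain ⟨hq0, h02, h03⟩ := hstep1
    obtain ⟨hq1, h12, h13⟩ := hstep2
    have hw0w1 : w0 < w1 := by
      have hne : w0 ≠ w1 := by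
        intro h
        exact h03 0 haM hw0pos (h ▸ hq1)
      omega
    by_cases h0vh : w0 = vh
    · have hbvp : b = vp := by
        rcases C.hv (h0vh ▸ hq0) with h | h <;> omega
      have hw1vh : w1 ≠ vh := by omega
      have hM0w1 : ∀ z ∈ M, 0 < z → z < w1 → False := by
        intro z hz hz1 hz2
        have hpz := h12 z hz hz2
        have := C.hu hpz hq1 hw1vh
        omega
      have hMmid : ∀ z ∈ M, 0 < z → z < b → z = vm := by
        intro z hz hz1 hz2
        have hzw1 : w1 < z := by
          rcases lt_trichotomy z w1 with h' | h' | h'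
          · exact (hM0w1 z hz hz1 h').elim
          · exact absurd (h' ▸ hz) hw1M
          · exact h'
        have hpz := h02 z hz (by omega)
        rcases C.hv (h0vh ▸ hpz) with h' | h' <;> omega
      by_cases hvmM : vm ∈ M
      · have hvmw1 : w1 < vm := by
          rcases lt_trichotomy vm w1 with h' | h' | h'
          · exfalso
            rcases Nat.eq_zero_or_pos vm with h'' | h''
            · exact h03 vm hvmM (by omega) (h0vh ▸ C.hm)
            · exact hM0w1 vm hvmM h'' h'
          · exact absurd (h' ▸ hvmM) hw1M
          · exact h'
        have hhole : ∀ z, 0 < z → z < b → z = vm ∨ z = w0 ∨ z = w1 := by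
          intro z hz1 hz2
          by_cases hzM : z ∈ M
          · exact Or.inl (hMmid z hzM hz1 hz2)
          · rcases L2' hz1 hz2 hzM with ⟨hq', _, _⟩ | ⟨hq', _, _⟩
            · right; right
              exact C.hu (pq_comm hq') (pq_comm hq1) (by omega)
            · right; left
              exact C.hu (pq_comm hq') (pq_comm hq0) (by omega)
        have e1 := hhole 1 (by omega) (by omega)
        have e2 := hhole 2 (by omega) (by omega)
        have e3 := hhole 3 (by omega) (by omega)
        by_cases hn5 : n = 5
        · rcases e1 with h | h | h <;> rcases e2 with h' | h' | h' <;>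
            rcases e3 with h'' | h'' | h'' <;> omega
        · have e4 := hhole 4 (by omega) (by omega)
          rcases e1 with h | h | h <;> rcases e2 with h' | h' | h' <;>
            rcases e3 with h'' | h'' | h'' <;> rcases e4 with h3 | h3 | h3 <;> omega
      · have hMeq : M = ({0, b} : Set ℕ) := by
          ext z
          constructor
          · intro hz
            by_cases hz0 : z = 0
            · exact Or.inl hz0
            · by_cases hzb : z = b
              · exact Or.inr (by rw [Set.mem_singleton_iff]; exact hzb)
              · exfalso
                have h2' := hbmax z hz
                have := hMmid z hz (by omega) (by omega)
                exact hvmM (this ▸ hz)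
          · intro hz
            rcases hz with rfl | hz
            · exact haM
            · rw [Set.mem_singleton_iff] at hz; subst hz; exact hbM
        exact k2 hn C h0S hn1S hgap hirr hc2 hc3 hc4 (show (0:ℕ) < b by omega) hbn
          (hMeq ▸ hMod) (hMeq ▸ hMvp)
    · by_cases h1vh : w1 = vh
      · have hvm0 : vm = 0 := by
          rcases C.hv (h1vh ▸ hq1) with h | h <;> omega
        have hM0mid : ∀ z ∈ M, 0 < z → z < b → z = vp := by
          intro z hz hz1 hz2
          rcases lt_trichotomy z w1 with h' | h' | h'
          · have hpz := h12 z hz h'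
            rcases C.hv (h1vh ▸ hpz) with h'' | h'' <;> omega
          · exact absurd (h' ▸ hz) hw1M
          · exfalso
            have hpz := h02 z hz (by omega)
            have := C.hu hpz hq0 h0vh
            omega
        by_cases hvpM : vp ∈ M
        · have hvpb : vp ≠ b := by
            intro h
            refine h13 b hbM hw1b ?_
            rw [h1vh, ← h]
            exact C.hp
          have hvpw0 : vp < w0 := by
            rcases lt_trichotomy vp w0 with h' | h' | h'
            · exact h'
            · exact absurd (h' ▸ hvpM) hw0M
            · exfalso
              have hpz := h02 vp hvpM h'
              have := C.hu hpz hq0 h0vh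
              exact hvpb this
          have hhole : ∀ z, 0 < z → z < b → z = vp ∨ z = w0 ∨ z = w1 := by
            intro z hz1 hz2
            by_cases hzM : z ∈ M
            · exact Or.inl (hM0mid z hzM hz1 hz2)
            · rcases L2' hz1 hz2 hzM with ⟨hq', _, _⟩ | ⟨hq', _, _⟩
              · right; right
                have h0vh' : (0:ℕ) ≠ vh := by omega
                have := C.hu (pq_comm hq')
                  (by rw [← hvm0]; exact pq_comm C.hm) h0vh'
                omega
              · right; left
                exact C.hu (pq_comm hq') (pq_comm hq0) (by omega)
          have e1 := hhole 1 (by omega) (by omega)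
          have e2 := hhole 2 (by omega) (by omega)
          have e3 := hhole 3 (by omega) (by omega)
          by_cases hn5 : n = 5
          · rcases e1 with h | h | h <;> rcases e2 with h' | h' | h' <;>
              rcases e3 with h'' | h'' | h'' <;> omega
          · have e4 := hhole 4 (by omega) (by omega)
            rcases e1 with h | h | h <;> rcases e2 with h' | h' | h' <;>
              rcases e3 with h'' | h'' | h'' <;> rcases e4 with h3 | h3 | h3 <;> omega
        · have hMeq : M = ({0, b} : Set ℕ) := by
            ext z
            constructor
            · intro hz
              by_cases hz0 : z = 0
              · exact Or.inl hz0
              · by_cases hzb : z = b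
                · exact Or.inr (by rw [Set.mem_singleton_iff]; exact hzb)
                · exfalso
                  have h2' := hbmax z hz
                  have := hM0mid z hz (by omega) (by omega)
                  exact hvpM (this ▸ hz)
            · intro hz
              rcases hz with rfl | hz
              · exact haM
              · rw [Set.mem_singleton_iff] at hz; subst hz; exact hbM
          exact k2 hn C h0S hn1S hgap hirr hc2 hc3 hc4 (show (0:ℕ) < b by omega) hbn
            (hMeq ▸ hMod) (hMeq ▸ hMvp)
      · have hMeq : M = ({0, b} : Set ℕ) := by
          ext z
          constructor
          · intro hz
            by_cases hz0 : z = 0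
            · exact Or.inl hz0
            · by_cases hzb : z = b
              · exact Or.inr (by rw [Set.mem_singleton_iff]; exact hzb)
              · exfalso
                have h2' := hbmax z hz
                rcases lt_trichotomy z w1 with h' | h' | h'
                · have hpz := h12 z hz h'
                  have := C.hu hpz hq1 h1vh
                  omega
                · exact hw1M (h' ▸ hz)
                · have hpz := h02 z hz (by omega)
                  have := C.hu hpz hq0 h0vh
                  omega
          · intro hz
            rcases hz with rfl | hz
            · exact haM
            · rw [Set.mem_singleton_iff] at hz; subst hz; exact hbM
        exact k2 hn C h0S hn1S hgap hirr hc2 hc3 hc4 (show (0:ℕ) < b by omega) hbn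
          (hMeq ▸ hMod) (hMeq ▸ hMvp)
  · -- CASE α : not the full interval
    by_cases hcross : vh ∉ M ∧ a < vh ∧ vh < b ∧ ∃ u, pq Q vh u ∧ (u < a ∨ b < u)
    · -- α2 : vh is a hole with a partner outside [a, b]
      obtain ⟨hvhM, hvha, hvhb, u, hvhu, huout⟩ := hcross
      rcases L2' hvha hvhb hvhM with ⟨hqa, hs2, hs3⟩ | ⟨hqb, hs2, hs3⟩
      · -- send type : pq Q vh a
        have hamem := C.hv hqa
        have humem := C.hv hvhu
        have hau : a ≠ u := by omega
        have hpartners : ∀ z, pq Q vh z → z = a ∨ z = u := by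
          intro z hz
          rcases C.hv hz with rfl | rfl <;> omega
        have hMav : ∀ z ∈ M, a < z → z < vh → False := by
          intro z hz h1 h2
          have hpz := hs2 z hz h2
          rcases hpartners z hpz with rfl | rfl
          · omega
          · have := hamin z hz; have := hbmax z hz; omega
        by_cases hva1 : vh = a + 1
        · -- main subcase
          have hq : pq Q a (a + 1) := by
            have := pq_comm hqa
            rwa [hva1] at this
          obtain ⟨_, _, _, h4⟩ := hc4 a (by omega) hq
          have ha2S : a + 2 ∈ ⋃₀ Q := by rwa [hva1] at h4
          have haS : a ∈ ⋃₀ Q := (pq_mem_S C hq).1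
          have hhole : ∀ w, a < w → w < b → w ∉ M → w = a + 1 := by
            intro w h1 h2 h3
            by_contra hww
            rcases L2' h1 h2 h3 with ⟨hq', _, _⟩ | ⟨hq', hr2, hr3⟩
            · have := C.hu (pq_comm hq') (pq_comm hqa) (by omega)
              omega
            · have hwvh : w ≠ vh := by omega
              have hMwb : ∀ z ∈ M, w < z → z < b → False := by
                intro z hz hz1 hz2
                have hpz := hr2 z hz hz1
                have := C.hu hpz hq' hwvh
                omega
              have hwb1 : w = b - 1 := by
                by_contra h
                have hw1M' : w + 1 ∉ M := fun hz => hMwb (w + 1) hz (by omega) (by omega)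
                rcases L2' (by omega : a < w + 1) (by omega : w + 1 < b) hw1M' with
                  ⟨hq'', _, _⟩ | ⟨hq'', _, _⟩
                · have := C.hu (pq_comm hq'') (pq_comm hqa) (by omega)
                  omega
                · have hbvh : b ≠ vh := by omega
                  have := C.hu (pq_comm hq'') (pq_comm hq') hbvh
                  omega
              have hq'' : pq Q w (w + 1) := by
                have hb' : b = w + 1 := by omega
                rwa [hb'] at hq'
              obtain ⟨hA, _, _, _⟩ := hc4 w (by omega) hq''
              omega
          by_cases hMab : M = ({a, b} : Set ℕ)
          · exact k2 hn C h0S hn1S hgap hirr hc2 hc3 hc4 hab hbn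
              (hMab ▸ hMod) (hMab ▸ hMvp)
          · have hba2 : a + 2 ≤ b := by
              have : b ≠ a + 1 := by
                intro h
                exact hvhM (by rw [hva1, ← h]; exact hbM)
              omega
            have ha2M : a + 2 ∈ M := by
              by_cases h : a + 2 = b
              · exact h ▸ hbM
              · by_contra h'
                have := hhole (a + 2) (by omega) (by omega) h'
                omega
            have hclosed : ∀ x ∈ ⋃₀ Q, x ∈ Set.Icc (a + 2) b → ∀ w, pq Q x w →
                w ∈ Set.Icc (a + 2) b := by
              intro x hxS hxIcc w hxw
              rw [Set.mem_Icc] at hxIcc ⊢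
              have hxM : x ∈ M := by
                by_contra h
                rcases (by omega : x = b ∨ x < b) with h' | h'
                · exact h (h' ▸ hbM)
                · have := hhole x (by omega) h' h
                  omega
              have hw := L1' hxM hxw
              have hwa : w ≠ a := by
                intro h
                subst h
                have := C.hu (pq_comm hxw) (pq_comm hqa) (by omega)
                omega
              have hwa1 : w ≠ a + 1 := by
                intro h
                subst h
                have hx' : pq Q x vh := by rw [hva1]; exact hxw
                rcases hpartners x (pq_comm hx') with rfl | rfl
                · omega
                · omega
              omega
            rcases gen_irr C hirr hclosed with h | h
            · have : a + 2 ∈ ⋃₀ Q ∩ Set.Icc (a + 2) b :=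
                ⟨ha2S, Set.mem_Icc.mpr ⟨le_refl _, hba2⟩⟩
              rw [h] at this
              exact this
            · have : a ∈ ⋃₀ Q ∩ Set.Icc (a + 2) b := h.symm ▸ haS
              have := (Set.mem_Icc.mp this.2).1
              omega
        · -- vh ≠ a + 1 : M = {a, b}
          have haw1M : a + 1 ∉ M := fun h => hMav (a + 1) h (by omega) (by omega)
          rcases L2' (by omega : a < a + 1) (by omega : a + 1 < b) haw1M with
            ⟨hq', _, _⟩ | ⟨hq', hr2, hr3⟩
          · have := C.hu (pq_comm hq') (pq_comm hqa) (by omega)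
            omega
          · have hMeq : M = ({a, b} : Set ℕ) := by
              ext z
              constructor
              · intro hz
                have h1 := hamin z hz
                have h2 := hbmax z hz
                by_cases hza : z = a
                · exact Or.inl hza
                · by_cases hzb : z = b
                  · exact Or.inr (by rw [Set.mem_singleton_iff]; exact hzb)
                  · exfalso
                    have hza1 : z ≠ a + 1 := fun h => haw1M (h ▸ hz)
                    rcases (by omega : z < a + 1 ∨ a + 1 < z) with h' | h'
                    · omega
                    · have hpz := hr2 z hz h'
                      have := C.hu hpz hq' (by omega)
                      omega
              · intro hz
                rcases hz with rfl | hz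
                · exact haM
                · rw [Set.mem_singleton_iff] at hz; subst hz; exact hbM
            exact k2 hn C h0S hn1S hgap hirr hc2 hc3 hc4 hab hbn
              (hMeq ▸ hMod) (hMeq ▸ hMvp)
      · -- receive type : pq Q vh b (mirror)
        have hbmem := C.hv hqb
        have humem := C.hv hvhu
        have hbu : b ≠ u := by omega
        have hpartners : ∀ z, pq Q vh z → z = b ∨ z = u := by
          intro z hz
          rcases C.hv hz with rfl | rfl <;> omega
        have hMvb : ∀ z ∈ M, vh < z → z < b → False := by
          intro z hz h1 h2
          have hpz := hs2 z hz h1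
          rcases hpartners z hpz with rfl | rfl
          · omega
          · have := hamin z hz; have := hbmax z hz; omega
        by_cases hvb1 : vh = b - 1
        · -- main subcase
          have hq' : pq Q (b - 1) ((b - 1) + 1) := by
            have h' : (b - 1) + 1 = b := by omega
            rw [h']
            rwa [hvb1] at hqb
          obtain ⟨_, _, h3, _⟩ := hc4 (b - 1) (by omega) hq'
          have hb2S : b - 2 ∈ ⋃₀ Q := by
            rw [hvb1] at h3
            have h' : b - 1 - 1 = b - 2 := by omega
            rwa [h'] at h3
          have hbS : b ∈ ⋃₀ Q := (pq_mem_S C hqb).2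
          have hhole : ∀ w, a < w → w < b → w ∉ M → w = b - 1 := by
            intro w h1 h2 h3'
            by_contra hww
            rcases L2' h1 h2 h3' with ⟨hq2, hr2, hr3⟩ | ⟨hq2, _, _⟩
            · have hwvh : w ≠ vh := by omega
              have hMaw : ∀ z ∈ M, a < z → z < w → False := by
                intro z hz hz1 hz2
                have hpz := hr2 z hz hz2
                have := C.hu hpz hq2 hwvh
                omega
              have hwa1 : w = a + 1 := by
                by_contra h
                have hw1M' : w - 1 ∉ M := fun hz => hMaw (w - 1) hz (by omega) (by omega)
                rcases L2' (by omega : a < w - 1) (by omega : w - 1 < b) hw1M' with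
                  ⟨hq3, _, _⟩ | ⟨hq3, _, _⟩
                · have havh : a ≠ vh := by omega
                  have := C.hu (pq_comm hq3) (pq_comm hq2) havh
                  omega
                · have hbvh : b ≠ vh := by omega
                  have := C.hu (pq_comm hq3) (pq_comm hqb) hbvh
                  omega
              have hqq : pq Q a (a + 1) := by
                have := pq_comm hq2
                rwa [hwa1] at this
              obtain ⟨hA, _, _, _⟩ := hc4 a (by omega) hqq
              omega
            · have hbvh : b ≠ vh := by omega
              have := C.hu (pq_comm hq2) (pq_comm hqb) hbvh
              omega
          by_cases hMab : M = ({a, b} : Set ℕ)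
          · exact k2 hn C h0S hn1S hgap hirr hc2 hc3 hc4 hab hbn
              (hMab ▸ hMod) (hMab ▸ hMvp)
          · have hba2 : a ≤ b - 2 := by
              have : a ≠ b - 1 := by
                intro h
                exact hvhM (by rw [hvb1, ← h]; exact haM)
              omega
            have hb2M : b - 2 ∈ M := by
              by_cases h : b - 2 = a
              · exact h ▸ haM
              · by_contra h'
                have := hhole (b - 2) (by omega) (by omega) h'
                omega
            have hclosed : ∀ x ∈ ⋃₀ Q, x ∈ Set.Icc a (b - 2) → ∀ w, pq Q x w →
                w ∈ Set.Icc a (b - 2) := by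
              intro x hxS hxIcc w hxw
              rw [Set.mem_Icc] at hxIcc ⊢
              have hxM : x ∈ M := by
                by_contra h
                rcases (by omega : x = a ∨ a < x) with h' | h'
                · exact h (h' ▸ haM)
                · have := hhole x h' (by omega) h
                  omega
              have hw := L1' hxM hxw
              have hwb : w ≠ b := by
                intro h
                subst h
                have := C.hu (pq_comm hxw) (pq_comm hqb) (by omega)
                omega
              have hwb1 : w ≠ b - 1 := by
                intro h
                subst h
                have hx' : pq Q x vh := by rw [hvb1]; exact hxw
                rcases hpartners x (pq_comm hx') with rfl | rfl
                · omega
                · omega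
              omega
            rcases gen_irr C hirr hclosed with h | h
            · have : b - 2 ∈ ⋃₀ Q ∩ Set.Icc a (b - 2) :=
                ⟨hb2S, Set.mem_Icc.mpr ⟨hba2, le_refl _⟩⟩
              rw [h] at this
              exact this
            · have : b ∈ ⋃₀ Q ∩ Set.Icc a (b - 2) := h.symm ▸ hbS
              have := (Set.mem_Icc.mp this.2).2
              omega
        · -- vh ≠ b - 1 : M = {a, b}
          have hbw1M : b - 1 ∉ M := fun h => hMvb (b - 1) h (by omega) (by omega)
          rcases L2' (by omega : a < b - 1) (by omega : b - 1 < b) hbw1M with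
            ⟨hq', hr2, hr3⟩ | ⟨hq', _, _⟩
          · have hMeq : M = ({a, b} : Set ℕ) := by
              ext z
              constructor
              · intro hz
                have h1 := hamin z hz
                have h2 := hbmax z hz
                by_cases hza : z = a
                · exact Or.inl hza
                · by_cases hzb : z = b
                  · exact Or.inr (by rw [Set.mem_singleton_iff]; exact hzb)
                  · exfalso
                    rcases (by omega : z < b - 1 ∨ z = b - 1) with h' | h'
                    · have hpz := hr2 z hz h'
                      have := C.hu hpz hq' (by omega)
                      omega
                    · exact hbw1M (h' ▸ hz)
              · intro hz
                rcases hz with rfl | hz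
                · exact haM
                · rw [Set.mem_singleton_iff] at hz; subst hz; exact hbM
            exact k2 hn C h0S hn1S hgap hirr hc2 hc3 hc4 hab hbn
              (hMeq ▸ hMod) (hMeq ▸ hMvp)
          · have hbvh : b ≠ vh := by omega
            have := C.hu (pq_comm hq') (pq_comm hqb) hbvh
            omega
    · -- α1 : no crossing
      push_neg at hcross
      have hclosed : ∀ x ∈ ⋃₀ Q, x ∈ Set.Icc a b → ∀ w, pq Q x w →
          w ∈ Set.Icc a b := by
        intro x hxS hxIcc w hxw
        rw [Set.mem_Icc] at hxIcc ⊢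
        by_cases hxM : x ∈ M
        · exact L1' hxM hxw
        · have hxa : a < x := by
            rcases (by omega : a = x ∨ a < x) with h | h
            · exact absurd (h ▸ haM) hxM
            · exact h
          have hxb : x < b := by
            rcases (by omega : x = b ∨ x < b) with h | h
            · exact absurd (h.symm ▸ hbM) hxM
            · exact h
          rcases L2' hxa hxb hxM with ⟨hq', _, _⟩ | ⟨hq', _, _⟩
          · by_cases hxvh : x = vh
            · have := hcross (by rw [← hxvh]; exact hxM) (by omega) (by omega) w
                (by rw [← hxvh]; exact hxw)
              omega
            · have := C.hu hxw hq' hxvh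
              omega
          · by_cases hxvh : x = vh
            · have := hcross (by rw [← hxvh]; exact hxM) (by omega) (by omega) w
                (by rw [← hxvh]; exact hxw)
              omega
            · have := C.hu hxw hq' hxvh
              omega
      rcases gen_irr C hirr hclosed with h | h
      · have hnotS : ∀ z, a ≤ z → z ≤ b → z ∉ ⋃₀ Q := by
          intro z h1 h2 hz
          have : z ∈ ⋃₀ Q ∩ Set.Icc a b := ⟨hz, Set.mem_Icc.mpr ⟨h1, h2⟩⟩
          rw [h] at this
          exact this
        by_cases ha0 : a = 0
        · exact hnotS 0 (by omega) (by omega) h0S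
        · by_cases hb1 : a + 1 = n - 1
          · exact hnotS (a + 1) (by omega) (by omega) (hb1.symm ▸ hn1S)
          · rcases hgap a (by omega) (by omega) with h' | h'
            · exact hnotS a (le_refl _) (by omega) h'
            · exact hnotS (a + 1) (by omega) (by omega) h'
      · rcases not_and_or.mp hfull with h' | h'
        · have h0 : (0:ℕ) ∈ ⋃₀ Q ∩ Set.Icc a b := h.symm ▸ h0S
          have := (Set.mem_Icc.mp h0.2).1
          omega
        · have h1 : n - 1 ∈ ⋃₀ Q ∩ Set.Icc a b := h.symm ▸ hn1S
          have := (Set.mem_Icc.mp h1.2).2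
          omega

end Backward

end S4

/-- Theorem 3. Let `n ≥ 5`, `V = {0, …, n−1}`, `Q` a partial
quasi-pairing of `V` with distinguished data `(vh, vm, vp)`, and
`T := Inv(underline(n), Q)`. Then `T` is indecomposable iff:
(C1) `⋃₀ Q` is a transversal of `mc(underline(n))` and `Q` is an irreducible quasi-pairing
of `⋃₀ Q`; (C2) `v_Q^+ ≥ v_Q^- + 2`; (C3) if `{v, v+2} ∈ Q` and `{v+1, v+3} ∈ Q`, then
`v̂_Q ∈ {v, v+3}`; (C4) if `{v, v+1} ∈ Q`, then `v̂_Q ∈ {v, v+1}` and both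
`v̂_Q − 1 ∈ ⋃₀ Q` and `v̂_Q + 1 ∈ ⋃₀ Q`. -/
theorem stmt_4 (n : ℕ) (hn : 5 ≤ n) (Q : Set (Set ℕ))
    (hQ : IsPartialQuasiPairingOn (Set.Iio n) Q)
    (vh vm vp : ℕ) (hdata : QPData Q vh vm vp) :
    IndecomposableOn Q (Set.Iio n) ↔
      ((TransversalOf (⋃₀ Q) (mcOn (Set.Iio n)) ∧
          IrreducibleOn (⋃₀ Q) (QPart Q vh vm vp)) ∧
        vm + 2 ≤ vp ∧
        (∀ v < n, ({v, v + 2} : Set ℕ) ∈ Q → ({v + 1, v + 3} : Set ℕ) ∈ Q →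
          (vh = v ∨ vh = v + 3)) ∧
        (∀ v < n, ({v, v + 1} : Set ℕ) ∈ Q →
          (vh = v ∨ vh = v + 1) ∧ 1 ≤ vh ∧ vh - 1 ∈ ⋃₀ Q ∧ vh + 1 ∈ ⋃₀ Q)) := by
  obtain ⟨hm, hp, hmp⟩ := hdata
  have C : S4.Ctx n Q vh vm vp := S4.mkCtx hQ hm hp hmp
  constructor
  · intro hInd
    exact ⟨⟨S4.fw_tr hn C hInd, S4.fw_irr hn C hInd⟩, S4.fw_c2 hn C hInd,
      fun v hv h1 h2 => S4.fw_c3 hn C hInd v hv h1 h2,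
      fun v hv h1 => S4.fw_c4 hn C hInd v hv h1⟩
  · rintro ⟨⟨htr, hirr⟩, hc2, hc3, hc4⟩
    have h0S : 0 ∈ ⋃₀ Q := by
      obtain ⟨x, hx1, hx2⟩ := htr {0} (S4.mc_zero hn)
      rw [Set.mem_singleton_iff] at hx2
      rwa [hx2] at hx1
    have hn1S : n - 1 ∈ ⋃₀ Q := by
      obtain ⟨x, hx1, hx2⟩ := htr {n - 1} (S4.mc_last hn)
      rw [Set.mem_singleton_iff] at hx2
      rwa [hx2] at hx1
    have hgap : ∀ i, 1 ≤ i → i + 1 ≤ n - 2 → (i ∈ ⋃₀ Q ∨ i + 1 ∈ ⋃₀ Q) := by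
      intro i h1 h2
      obtain ⟨x, hx1, hx2⟩ := htr {i, i + 1} (S4.mc_pair hn h1 h2)
      rcases hx2 with rfl | hx2
      · exact Or.inl hx1
      · rw [Set.mem_singleton_iff] at hx2
        rw [hx2] at hx1
        exact Or.inr hx1
    exact S4.backward hn C h0S hn1S hgap hirr hc2
      (fun v hv h1 h2 => hc3 v hv h1 h2)
      (fun v hv h1 => hc4 v hv h1)
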